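/- arXiv:1602.02705 — 6 statements merged into one kernel-verified Lean document; each statement's English description precedes it below -/
import Mathlib

section
/- Let N be an odd prime and a ≥ 1 an integer. Then (∏_{k=1}^{N-1} k^{⌊ak/N⌋})^4 ≡ 1 (mod N). -/
open Finset

lemma Qpow4 (N : ℕ) (hN : N.Prime) :
    (∏ k ∈ Icc 1 (N-1), (k : ZMod N) ^ k) ^ 4 = 1 := by
  haveI : Fact N.Prime := ⟨hN⟩
  have hN2 : 2 ≤ N := hN.two_le
  set Q := ∏ k ∈ Icc 1 (N-1), (k : ZMod N) ^ k with hQ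
  have hrefl : Q = ∏ k ∈ Icc 1 (N-1), ((N - k : ℕ) : ZMod N) ^ (N - k) := by
    rw [hQ]
    apply Finset.prod_nbij' (i := fun k => N - k) (j := fun k => N - k)
    · intro k hk; simp only [mem_Icc] at *; omega
    · intro k hk; simp only [mem_Icc] at *; omega
    · intro k hk; simp only [mem_Icc] at *; omega
    · intro k hk; simp only [mem_Icc] at *; omega
    · intro k hk
      simp only [mem_Icc] at hk
      have : N - (N - k) = k := by omega
      rw [this]
  have hQ2 : Q ^ 2 = (-1 : ZMod N) ^ (∑ k ∈ Icc 1 (N-1), (N - k)) * (-1) := by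
    have : Q ^ 2 = ∏ k ∈ Icc 1 (N-1),
        ((k : ZMod N) ^ k * ((N - k : ℕ) : ZMod N) ^ (N - k)) := by
      rw [Finset.prod_mul_distrib, ← hQ, ← hrefl]; ring
    rw [this]
    have hterm : ∀ k ∈ Icc 1 (N-1),
        (k : ZMod N) ^ k * ((N - k : ℕ) : ZMod N) ^ (N - k)
          = (-1 : ZMod N) ^ (N - k) * (k : ZMod N) := by
      intro k hk
      simp only [mem_Icc] at hk
      have hkN : k ≤ N := by omega
      have hcast : ((N - k : ℕ) : ZMod N) = -(k : ZMod N) := by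
        rw [Nat.cast_sub hkN]; simp
      rw [hcast, neg_pow]
      have : (k : ZMod N) ^ k * ((-1 : ZMod N) ^ (N - k) * (k : ZMod N) ^ (N - k))
          = (-1 : ZMod N) ^ (N - k) * (k : ZMod N) ^ (k + (N - k)) := by
        rw [pow_add]; ring
      rw [this, Nat.add_sub_cancel' hkN, ZMod.pow_card]
    rw [Finset.prod_congr rfl hterm, Finset.prod_mul_distrib, Finset.prod_pow_eq_pow_sum]
    congr 1
    rw [← Finset.Ico_add_one_right_eq_Icc, ← Nat.cast_prod, Finset.prod_Ico_id_eq_factorial, ZMod.wilsons_lemma]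
  have : Q ^ 4 = (Q ^ 2) ^ 2 := by ring
  rw [this, hQ2, mul_pow, ← pow_mul, mul_comm _ 2, pow_mul]
  simp

/-- For `N` an odd prime and `a ≥ 1`, `(∏_{k=1}^{N-1} k^{⌊ak/N⌋})^4 ≡ 1 (mod N)`. -/
theorem prod_pow_floor_fourth_power (N a : ℕ) (hN : N.Prime) (hNodd : Odd N) (ha : 1 ≤ a) :
    (∏ k ∈ Finset.Icc 1 (N - 1), (k : ZMod N) ^ (a * k / N)) ^ 4 = 1 := by
  haveI : Fact N.Prime := ⟨hN⟩
  have hN2 : 2 ≤ N := hN.two_le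
  have hNpos : 0 < N := by omega
  set Q := ∏ k ∈ Icc 1 (N-1), (k : ZMod N) ^ k with hQdef
  set P := ∏ k ∈ Icc 1 (N-1), (k : ZMod N) ^ (a * k / N) with hPdef
  by_cases hdvd : N ∣ a
  · obtain ⟨b, rfl⟩ := hdvd
    have hP : P = Q ^ b := by
      rw [hPdef, hQdef, ← Finset.prod_pow]
      apply Finset.prod_congr rfl
      intro k hk
      rw [← pow_mul]
      congr 1
      rw [mul_assoc, Nat.mul_div_cancel_left _ hNpos, mul_comm]
    rw [hP, ← pow_mul, mul_comm b 4, pow_mul, Qpow4 N hN, one_pow]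
  · have haz : (a : ZMod N) ≠ 0 := by
      rwa [Ne, ZMod.natCast_eq_zero_iff]
    set c : ZMod N := (a : ZMod N)⁻¹ with hc
    have hcz : c ≠ 0 := inv_ne_zero haz
    have hca : c * (a : ZMod N) = 1 := inv_mul_cancel₀ haz
    set R := ∏ k ∈ Icc 1 (N-1), (k : ZMod N) ^ (a * k % N) with hRdef
    -- nonvanishing of casts of elements of Icc
    have hmemne : ∀ k ∈ Icc 1 (N-1), (k : ZMod N) ≠ 0 := by
      intro k hk
      simp only [mem_Icc] at hk
      rw [Ne, ZMod.natCast_eq_zero_iff]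
      intro h
      have := Nat.le_of_dvd (by omega) h
      omega
    have hPR : P * R = Q ^ a := by
      rw [hPdef, hRdef, hQdef, ← Finset.prod_pow, ← Finset.prod_mul_distrib]
      apply Finset.prod_congr rfl
      intro k hk
      calc (k:ZMod N)^(a*k/N) * (k:ZMod N)^(a*k%N)
          = ((k:ZMod N)^N)^(a*k/N) * (k:ZMod N)^(a*k%N) := by rw [ZMod.pow_card]
        _ = (k:ZMod N)^(N*(a*k/N) + a*k%N) := by rw [← pow_mul, ← pow_add]
        _ = (k:ZMod N)^(k*a) := by rw [Nat.div_add_mod, mul_comm]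
        _ = ((k:ZMod N)^k)^a := by rw [pow_mul]
    have hR : R = ∏ j ∈ Icc 1 (N-1), (c * (j : ZMod N)) ^ j := by
      rw [hRdef]
      apply Finset.prod_nbij' (i := fun k => a * k % N)
        (j := fun m => (c * (m : ZMod N)).val)
      · intro k hk
        simp only [mem_Icc] at hk ⊢
        have h1 : a * k % N < N := Nat.mod_lt _ hNpos
        have h2 : a * k % N ≠ 0 := by
          rw [Ne, ← Nat.dvd_iff_mod_eq_zero]
          intro h
          rcases (Nat.Prime.dvd_mul hN).mp h with h' | h'
          · exact hdvd h'
          · have := Nat.le_of_dvd (by omega) h'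
            omega
        omega
      · intro m hm
        simp only [mem_Icc] at hm ⊢
        have hval : (c * (m : ZMod N)).val < N := ZMod.val_lt _
        have hne : c * (m : ZMod N) ≠ 0 :=
          mul_ne_zero hcz (hmemne m (by simp only [mem_Icc]; omega))
        have : (c * (m : ZMod N)).val ≠ 0 := by
          rw [Ne, ZMod.val_eq_zero]; exact hne
        omega
      · intro k hk
        simp only [mem_Icc] at hk
        have hcast : ((a * k % N : ℕ) : ZMod N) = (a : ZMod N) * k := by
          push_cast [ZMod.natCast_mod]
          ring
        rw [hcast, ← mul_assoc, hca, one_mul, ZMod.val_cast_of_lt (by omega)]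
      · intro m hm
        simp only [mem_Icc] at hm
        have : ((((c * (m : ZMod N)).val : ℕ)) : ZMod N) = c * (m : ZMod N) :=
          ZMod.natCast_rightInverse _
        have hval : a * (c * (m : ZMod N)).val % N
            = ((a * (c * (m : ZMod N)).val : ℕ) : ZMod N).val := by
          rw [ZMod.val_natCast]
        rw [hval]
        push_cast [this]
        rw [← mul_assoc, mul_comm (a : ZMod N) c, hca, one_mul,
          ZMod.val_cast_of_lt (by omega)]
      · intro k hk
        simp only [mem_Icc] at hk
        have hcast : ((a * k % N : ℕ) : ZMod N) = (a : ZMod N) * k := by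
          push_cast [ZMod.natCast_mod]
          ring
        rw [hcast, ← mul_assoc, hca, one_mul]
    have hR4 : R ^ 4 = 1 := by
      have : R = c ^ (∑ j ∈ Icc 1 (N-1), j) * Q := by
        rw [hR, hQdef, ← Finset.prod_pow_eq_pow_sum, ← Finset.prod_mul_distrib]
        exact Finset.prod_congr rfl fun j _ => mul_pow _ _ _
      rw [this, mul_pow, Qpow4 N hN, mul_one, ← pow_mul]
      have hsum : (∑ j ∈ Icc 1 (N-1), j) * 4 = (N - 1) * (2 * N) := by
        have h1 : (∑ j ∈ Icc 1 (N-1), j) = ∑ j ∈ range N, j := by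
          rw [← Finset.Ico_add_one_right_eq_Icc, show N - 1 + 1 = N by omega,
            Finset.range_eq_Ico, Finset.sum_eq_sum_Ico_succ_bot hNpos]
          simp
        have h2 := Finset.sum_range_id_mul_two N
        rw [h1]
        calc (∑ j ∈ range N, j) * 4 = ((∑ j ∈ range N, j) * 2) * 2 := by ring
          _ = N * (N - 1) * 2 := by rw [h2]
          _ = (N - 1) * (2 * N) := by ring
      rw [hsum, pow_mul, ZMod.pow_card_sub_one_eq_one hcz, one_pow]
    calc P ^ 4 = P ^ 4 * R ^ 4 := by rw [hR4, mul_one]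
    _ = (P * R) ^ 4 := by ring
    _ = (Q ^ 4) ^ a := by rw [hPR, ← pow_mul, ← pow_mul, mul_comm]
    _ = 1 := by rw [Qpow4 N hN, one_pow]
end

section
/- Let N and p be primes with p dividing N-1, let ν be the p-adic valuation of N-1, and let log : (Z/NZ)^× → Z/p^ν Z be a surjective group homomorphism. Then ∑_{k=1}^{N-1} k²·log(k) ≡ (-4/3)·∑_{k=1}^{(N-1)/2} k·log(k) (mod p^ν). -/
open Classical in
/-- The discrete logarithm attached to a homomorphism
`log : (Z/NZ)ˣ → Z/MZ`, extended by `0` to non-units of `Z/NZ`. -/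
noncomputable def dlog {N M : ℕ} (log : (ZMod N)ˣ →* Multiplicative (ZMod M))
    (x : ZMod N) : ZMod M :=
  if h : IsUnit x then Multiplicative.toAdd (log h.unit) else 0

lemma dlog_unit_spec {N M : ℕ} (log : (ZMod N)ˣ →* Multiplicative (ZMod M))
    (u : (ZMod N)ˣ) :
    dlog log (u : ZMod N) = Multiplicative.toAdd (log u) := by
  have h : IsUnit ((u : ZMod N)) := u.isUnit
  simp only [dlog, dif_pos h]
  congr 2
  exact Units.ext h.unit_spec

lemma dlog_one {N M : ℕ} (log : (ZMod N)ˣ →* Multiplicative (ZMod M)) :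
    dlog log (1 : ZMod N) = 0 := by
  have := dlog_unit_spec log 1
  simpa using this

lemma dlog_mul {N M : ℕ} (log : (ZMod N)ˣ →* Multiplicative (ZMod M))
    {x y : ZMod N} (hx : IsUnit x) (hy : IsUnit y) :
    dlog log (x * y) = dlog log x + dlog log y := by
  obtain ⟨u, rfl⟩ := hx
  obtain ⟨v, rfl⟩ := hy
  rw [← Units.val_mul, dlog_unit_spec, dlog_unit_spec, dlog_unit_spec, map_mul, toAdd_mul]

lemma dlog_inv {N M : ℕ} (log : (ZMod N)ˣ →* Multiplicative (ZMod M))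
    {x : ZMod N} (hx : IsUnit x) :
    dlog log x⁻¹ = - dlog log x := by
  have h1 : x * x⁻¹ = 1 := ZMod.mul_inv_of_unit x hx
  have hxi : IsUnit (x⁻¹ : ZMod N) := IsUnit.of_mul_eq_one _ (ZMod.inv_mul_of_unit x hx)
  have h2 := dlog_mul log hx hxi
  rw [h1, dlog_one] at h2
  linear_combination -h2

lemma six_mul_sum_sq (n : ℕ) :
    6 * ∑ k ∈ Finset.Icc 1 n, k ^ 2 = n * (n + 1) * (2 * n + 1) := by
  induction n with
  | zero => simp
  | succ m ih =>
    rw [Finset.sum_Icc_succ_top (by omega : 1 ≤ m + 1), mul_add, ih]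
    ring

/-- doubling map on `[1, 2n]`. -/
def dmap (n k : ℕ) : ℕ := if k ≤ n then 2 * k else 2 * k - (2 * n + 1)

/-- inverse of the doubling map. -/
def emap (n a : ℕ) : ℕ := if a % 2 = 1 then n + (a + 1) / 2 else a / 2

/-- reflection map. -/
def rmap (n k : ℕ) : ℕ := 2 * n + 1 - k

lemma key_lemma {R : Type*} [CommRing R] (n : ℕ) (L : ℕ → R) (c u2 u3 : R)
    (hn : 1 ≤ n)
    (hcastN : ((2 * n + 1 : ℕ) : R) = 1)
    (hrefl : ∀ k ∈ Finset.Icc 1 (2 * n), L (2 * n + 1 - k) = L k)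
    (hsum0 : ∑ k ∈ Finset.Icc 1 (2 * n), L k = 0)
    (hdbl1 : ∀ k ∈ Finset.Icc 1 n, L (2 * k) = c + L k)
    (hdbl2 : ∀ k ∈ Finset.Ioc n (2 * n), L (2 * k - (2 * n + 1)) = c + L k)
    (hC : ∑ k ∈ Finset.Icc 1 (2 * n), (k : R) ^ 2 = 0)
    (h2 : 2 * u2 = 1) (h3 : 3 * u3 = 1) :
    ∑ k ∈ Finset.Icc 1 (2 * n), (k : R) ^ 2 * L k
      = (-4 * u3) * ∑ k ∈ Finset.Icc 1 n, (k : R) * L k := by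
  -- splitting the full range
  have hsplit : ∀ f : ℕ → R, ∑ k ∈ Finset.Icc 1 (2 * n), f k
      = (∑ k ∈ Finset.Icc 1 n, f k) + ∑ k ∈ Finset.Ioc n (2 * n), f k := by
    intro f
    have hU : Finset.Icc 1 (2 * n) = Finset.Icc 1 n ∪ Finset.Ioc n (2 * n) := by
      ext x
      simp only [Finset.mem_Icc, Finset.mem_Ioc, Finset.mem_union]
      omega
    rw [hU, Finset.sum_union (Finset.disjoint_left.mpr (fun a h1 h2 => by
      simp only [Finset.mem_Icc, Finset.mem_Ioc] at h1 h2; omega))]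
  -- reflection
  have hreflect : ∀ (f g : ℕ → R), (∀ k ∈ Finset.Icc 1 n, f (2 * n + 1 - k) = g k) →
      ∑ k ∈ Finset.Ioc n (2 * n), f k = ∑ k ∈ Finset.Icc 1 n, g k := by
    intro f g hfg
    refine Finset.sum_nbij' (rmap n) (rmap n) ?_ ?_ ?_ ?_ ?_
    · intro a ha; simp only [Finset.mem_Ioc, Finset.mem_Icc, rmap] at *; omega
    · intro a ha; simp only [Finset.mem_Ioc, Finset.mem_Icc, rmap] at *; omega
    · intro a ha; simp only [Finset.mem_Ioc, rmap] at *; omega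
    · intro a ha; simp only [Finset.mem_Icc, rmap] at *; omega
    · intro a ha
      simp only [Finset.mem_Ioc] at ha
      have h1 : rmap n a ∈ Finset.Icc 1 n := by simp only [Finset.mem_Icc, rmap]; omega
      have h2 := hfg _ h1
      rw [show 2 * n + 1 - rmap n a = a from by simp only [rmap]; omega] at h2
      exact h2
  -- doubling
  have hdouble : ∀ (f g h' : ℕ → R), (∀ k ∈ Finset.Icc 1 n, f (2 * k) = g k) →
      (∀ k ∈ Finset.Ioc n (2 * n), f (2 * k - (2 * n + 1)) = h' k) →
      ∑ k ∈ Finset.Icc 1 (2 * n), f k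
        = (∑ k ∈ Finset.Icc 1 n, g k) + ∑ k ∈ Finset.Ioc n (2 * n), h' k := by
    intro f g h' hg hh
    have step : ∑ k ∈ Finset.Icc 1 (2 * n), f k
        = ∑ k ∈ Finset.Icc 1 (2 * n), f (dmap n k) := by
      refine Finset.sum_nbij' (emap n) (dmap n) ?_ ?_ ?_ ?_ ?_
      · intro a ha; simp only [Finset.mem_Icc, emap] at *; split_ifs <;> omega
      · intro a ha; simp only [Finset.mem_Icc, dmap] at *; split_ifs <;> omega
      · intro a ha; simp only [Finset.mem_Icc] at ha
        simp only [dmap, emap]; split_ifs <;> omega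
      · intro a ha; simp only [Finset.mem_Icc] at ha
        simp only [dmap, emap]; split_ifs <;> omega
      · intro a ha; simp only [Finset.mem_Icc] at ha
        have hda : dmap n (emap n a) = a := by
          simp only [dmap, emap]; split_ifs <;> omega
        show f a = f (dmap n (emap n a))
        rw [hda]
    have sp : ∑ k ∈ Finset.Icc 1 (2 * n), f (dmap n k)
        = (∑ k ∈ Finset.Icc 1 n, f (dmap n k)) + ∑ k ∈ Finset.Ioc n (2 * n), f (dmap n k) :=
      hsplit _
    rw [step, sp]
    congr 1
    · apply Finset.sum_congr rfl
      intro k hk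
      simp only [Finset.mem_Icc] at hk
      rw [show dmap n k = 2 * k from by simp only [dmap]; rw [if_pos hk.2]]
      exact hg k (by simp only [Finset.mem_Icc]; omega)
    · apply Finset.sum_congr rfl
      intro k hk
      simp only [Finset.mem_Ioc] at hk
      rw [show dmap n k = 2 * k - (2 * n + 1) from by simp only [dmap]; rw [if_neg (by omega)]]
      exact hh k (by simp only [Finset.mem_Ioc]; omega)
  -- basic cast
  have hc : ∀ k : ℕ, k ≤ 2 * n → ((2 * n + 1 - k : ℕ) : R) = 1 - (k : R) := by
    intro k hk
    rw [Nat.cast_sub (by omega), hcastN]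
  -- half-range sum of L vanishes
  have hH : ∑ k ∈ Finset.Icc 1 n, L k = 0 := by
    have e1 : ∑ k ∈ Finset.Ioc n (2 * n), L k = ∑ k ∈ Finset.Icc 1 n, L k :=
      hreflect L L (fun k hk => hrefl k (by simp only [Finset.mem_Icc] at *; omega))
    have e2 := hsplit L
    rw [hsum0, e1] at e2
    linear_combination (-u2) * e2 - (∑ k ∈ Finset.Icc 1 n, L k) * h2
  -- E3
  have e3 : ∑ k ∈ Finset.Icc 1 (2 * n), (k : R) ^ 2 * L k
      = 2 * (∑ k ∈ Finset.Icc 1 n, (k : R) ^ 2 * L k)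
        - 2 * (∑ k ∈ Finset.Icc 1 n, (k : R) * L k) := by
    have r1 : ∑ k ∈ Finset.Ioc n (2 * n), (k : R) ^ 2 * L k
        = ∑ k ∈ Finset.Icc 1 n, (L k - 2 * ((k : R) * L k) + (k : R) ^ 2 * L k) := by
      apply hreflect
      intro k hk
      simp only [Finset.mem_Icc] at hk
      show ((2 * n + 1 - k : ℕ) : R) ^ 2 * L (2 * n + 1 - k) = _
      rw [hc k (by omega), hrefl k (by simp only [Finset.mem_Icc]; omega)]
      ring
    have s1 : ∑ k ∈ Finset.Icc 1 n, (L k - 2 * ((k : R) * L k) + (k : R) ^ 2 * L k)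
        = (∑ k ∈ Finset.Icc 1 n, L k) - 2 * (∑ k ∈ Finset.Icc 1 n, (k : R) * L k)
          + ∑ k ∈ Finset.Icc 1 n, (k : R) ^ 2 * L k := by
      simp only [Finset.sum_add_distrib, Finset.sum_sub_distrib, ← Finset.mul_sum]
    have e2 : ∑ k ∈ Finset.Icc 1 (2 * n), (k : R) ^ 2 * L k
        = (∑ k ∈ Finset.Icc 1 n, (k : R) ^ 2 * L k)
          + ∑ k ∈ Finset.Ioc n (2 * n), (k : R) ^ 2 * L k := hsplit _
    linear_combination e2 + r1 + s1 + hH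
  -- E4
  have e4 : ∑ k ∈ Finset.Icc 1 (2 * n), (k : R) ^ 2 * L k
      = 8 * (∑ k ∈ Finset.Icc 1 n, (k : R) ^ 2 * L k)
        - 4 * (∑ k ∈ Finset.Icc 1 n, (k : R) * L k) := by
    have d1 : ∑ k ∈ Finset.Icc 1 (2 * n), (k : R) ^ 2 * L k
        = (∑ k ∈ Finset.Icc 1 n, (c * (4 * (k : R) ^ 2) + 4 * ((k : R) ^ 2 * L k)))
          + ∑ k ∈ Finset.Ioc n (2 * n),
              (c * ((2 * (k : R) - 1) ^ 2) + (2 * (k : R) - 1) ^ 2 * L k) := by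
      apply hdouble
      · intro k hk
        show ((2 * k : ℕ) : R) ^ 2 * L (2 * k) = _
        rw [hdbl1 k hk]
        push_cast
        ring
      · intro k hk
        simp only [Finset.mem_Ioc] at hk
        show ((2 * k - (2 * n + 1) : ℕ) : R) ^ 2 * L (2 * k - (2 * n + 1)) = _
        rw [hdbl2 k (by simp only [Finset.mem_Ioc]; omega), Nat.cast_sub (by omega), hcastN]
        push_cast
        ring
    have c1 : ∑ k ∈ Finset.Icc 1 n, (c * (4 * (k : R) ^ 2) + 4 * ((k : R) ^ 2 * L k))
        = c * (4 * (∑ k ∈ Finset.Icc 1 n, (k : R) ^ 2))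
          + 4 * (∑ k ∈ Finset.Icc 1 n, (k : R) ^ 2 * L k) := by
      simp only [Finset.sum_add_distrib, ← Finset.mul_sum]
    have c2 : ∑ k ∈ Finset.Ioc n (2 * n),
          (c * ((2 * (k : R) - 1) ^ 2) + (2 * (k : R) - 1) ^ 2 * L k)
        = c * (∑ k ∈ Finset.Ioc n (2 * n), (2 * (k : R) - 1) ^ 2)
          + ∑ k ∈ Finset.Ioc n (2 * n), (2 * (k : R) - 1) ^ 2 * L k := by
      simp only [Finset.sum_add_distrib, ← Finset.mul_sum]
    have r2 : ∑ k ∈ Finset.Ioc n (2 * n), (2 * (k : R) - 1) ^ 2 * L k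
        = ∑ k ∈ Finset.Icc 1 n, (L k - 4 * ((k : R) * L k) + 4 * ((k : R) ^ 2 * L k)) := by
      apply hreflect
      intro k hk
      simp only [Finset.mem_Icc] at hk
      show (2 * ((2 * n + 1 - k : ℕ) : R) - 1) ^ 2 * L (2 * n + 1 - k) = _
      rw [hc k (by omega), hrefl k (by simp only [Finset.mem_Icc]; omega)]
      ring
    have s2 : ∑ k ∈ Finset.Icc 1 n, (L k - 4 * ((k : R) * L k) + 4 * ((k : R) ^ 2 * L k))
        = (∑ k ∈ Finset.Icc 1 n, L k) - 4 * (∑ k ∈ Finset.Icc 1 n, (k : R) * L k)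
          + 4 * (∑ k ∈ Finset.Icc 1 n, (k : R) ^ 2 * L k) := by
      simp only [Finset.sum_add_distrib, Finset.sum_sub_distrib, ← Finset.mul_sum]
    have dC : ∑ k ∈ Finset.Icc 1 (2 * n), (k : R) ^ 2
        = (∑ k ∈ Finset.Icc 1 n, 4 * (k : R) ^ 2)
          + ∑ k ∈ Finset.Ioc n (2 * n), (2 * (k : R) - 1) ^ 2 := by
      apply hdouble
      · intro k hk
        show ((2 * k : ℕ) : R) ^ 2 = _
        push_cast
        ring
      · intro k hk
        simp only [Finset.mem_Ioc] at hk
        show ((2 * k - (2 * n + 1) : ℕ) : R) ^ 2 = _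
        rw [Nat.cast_sub (by omega), hcastN]
        push_cast
        ring
    have cQ : 4 * (∑ k ∈ Finset.Icc 1 n, (k : R) ^ 2)
        + (∑ k ∈ Finset.Ioc n (2 * n), (2 * (k : R) - 1) ^ 2) = 0 := by
      have h0 := hC
      rw [dC] at h0
      simp only [← Finset.mul_sum] at h0
      exact h0
    linear_combination d1 + c1 + c2 + r2 + s2 + c * cQ + hH
  -- conclude
  have e6 : (∑ k ∈ Finset.Icc 1 n, (k : R) * L k)
      = 3 * ∑ k ∈ Finset.Icc 1 n, (k : R) ^ 2 * L k := by
    linear_combination (-u2) * e3 + u2 * e4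
      + (3 * (∑ k ∈ Finset.Icc 1 n, (k : R) ^ 2 * L k)
          - ∑ k ∈ Finset.Icc 1 n, (k : R) * L k) * h2
  linear_combination e3 + (4 * u3 - 2) * e6
    + (4 * ∑ k ∈ Finset.Icc 1 n, (k : R) ^ 2 * L k) * h3

/-- For primes `N, p ≥ 5` with `p ∣ N-1`, `ν = v_p(N-1)`, and a surjective
homomorphism `log : (Z/NZ)ˣ → Z/p^ν Z`, one has
`∑_{k=1}^{N-1} k²·log(k) ≡ (-4/3)·∑_{k=1}^{(N-1)/2} k·log(k) (mod p^ν)`. -/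
theorem sum_sq_log_eq_neg_four_thirds (p N ν : ℕ) (hp : p.Prime) (hN : N.Prime)
    (hp5 : 5 ≤ p) (hN5 : 5 ≤ N) (hdvd : p ∣ N - 1)
    (hν : ν = (N - 1).factorization p)
    (log : (ZMod N)ˣ →* Multiplicative (ZMod (p ^ ν)))
    (hlog : Function.Surjective log) :
    ∑ k ∈ Finset.Icc 1 (N - 1), (k : ZMod (p ^ ν)) ^ 2 * dlog log (k : ZMod N)
      = ((-4 : ZMod (p ^ ν)) * (3 : ZMod (p ^ ν))⁻¹) *
        ∑ k ∈ Finset.Icc 1 ((N - 1) / 2), (k : ZMod (p ^ ν)) * dlog log (k : ZMod N) := by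
  haveI : Fact N.Prime := ⟨hN⟩
  haveI : NeZero N := ⟨by omega⟩
  have hMdvd : p ^ ν ∣ N - 1 := by rw [hν]; exact Nat.ordProj_dvd _ _
  have hNodd : N % 2 = 1 := Nat.odd_iff.mp (hN.odd_of_ne_two (by omega))
  set n := (N - 1) / 2 with hn
  have hNn : N = 2 * n + 1 := by omega
  have hn1 : 1 ≤ n := by omega
  -- units mod p^ν
  have hc2 : Nat.Coprime 2 (p ^ ν) :=
    Nat.Coprime.pow_right ν ((Nat.coprime_primes Nat.prime_two hp).mpr (by omega))
  have hc3 : Nat.Coprime 3 (p ^ ν) :=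
    Nat.Coprime.pow_right ν ((Nat.coprime_primes Nat.prime_three hp).mpr (by omega))
  have hu2 : IsUnit (2 : ZMod (p ^ ν)) := by
    have := (ZMod.isUnit_iff_coprime 2 (p ^ ν)).mpr hc2
    simpa using this
  have hu3 : IsUnit (3 : ZMod (p ^ ν)) := by
    have := (ZMod.isUnit_iff_coprime 3 (p ^ ν)).mpr hc3
    simpa using this
  have h2 : (2 : ZMod (p ^ ν)) * (2 : ZMod (p ^ ν))⁻¹ = 1 := ZMod.mul_inv_of_unit _ hu2
  have h3 : (3 : ZMod (p ^ ν)) * (3 : ZMod (p ^ ν))⁻¹ = 1 := ZMod.mul_inv_of_unit _ hu3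
  -- units mod N
  have hunit : ∀ k : ℕ, 1 ≤ k → k ≤ 2 * n → IsUnit ((k : ZMod N)) := by
    intro k hk1 hk2
    have hne : ((k : ℕ) : ZMod N) ≠ 0 := by
      rw [Ne, ZMod.natCast_eq_zero_iff]
      intro h
      have := Nat.le_of_dvd (by omega) h
      omega
    exact isUnit_iff_ne_zero.mpr hne
  -- N ≡ 0 mod N cast fact
  have hN0 : ((2 * n + 1 : ℕ) : ZMod N) = 0 := by
    rw [← hNn]; exact ZMod.natCast_self N
  -- 2n ≡ 0 mod p^ν
  have h2n : (2 : ZMod (p ^ ν)) * (n : ZMod (p ^ ν)) = 0 := by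
    have hd : ((2 * n : ℕ) : ZMod (p ^ ν)) = 0 := by
      rw [ZMod.natCast_eq_zero_iff]
      have : N - 1 = 2 * n := by omega
      rwa [this] at hMdvd
    push_cast at hd
    exact hd
  have hcastN : ((2 * n + 1 : ℕ) : ZMod (p ^ ν)) = 1 := by
    push_cast
    rw [h2n]
    ring
  -- dlog (-1) = 0
  have hm1 : dlog log (-1 : ZMod N) = 0 := by
    have hu : IsUnit (-1 : ZMod N) := IsUnit.neg isUnit_one
    have e := dlog_mul log hu hu
    rw [neg_one_mul, neg_neg, dlog_one] at e
    linear_combination (-(2 : ZMod (p ^ ν))⁻¹) * e - dlog log (-1 : ZMod N) * h2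
  -- reflection property
  have hrefl : ∀ k ∈ Finset.Icc 1 (2 * n),
      dlog log ((2 * n + 1 - k : ℕ) : ZMod N) = dlog log (k : ZMod N) := by
    intro k hk
    simp only [Finset.mem_Icc] at hk
    have hcst : ((2 * n + 1 - k : ℕ) : ZMod N) = -1 * (k : ZMod N) := by
      rw [Nat.cast_sub (by omega), hN0]
      ring
    rw [hcst, dlog_mul log (IsUnit.neg isUnit_one) (hunit k hk.1 hk.2), hm1, zero_add]
  -- sum of dlog over all of [1, 2n] vanishes
  have hsum0 : ∑ k ∈ Finset.Icc 1 (2 * n), dlog log (k : ZMod N) = 0 := by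
    have key : ∑ k ∈ Finset.Icc 1 (2 * n), dlog log (k : ZMod N)
        = ∑ k ∈ Finset.Icc 1 (2 * n), (- dlog log (k : ZMod N)) := by
      refine Finset.sum_nbij' (fun k => (((k : ZMod N))⁻¹).val)
        (fun k => (((k : ZMod N))⁻¹).val) ?_ ?_ ?_ ?_ ?_
      · intro a ha
        simp only [Finset.mem_Icc] at *
        constructor
        · have hne : ((a : ZMod N))⁻¹ ≠ 0 := by
            intro h0
            have := ZMod.mul_inv_of_unit _ (hunit a ha.1 ha.2)
            rw [h0, mul_zero] at this
            simp at this
          have := (ZMod.val_eq_zero (((a : ZMod N))⁻¹)).not.mpr hne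
          omega
        · have := ZMod.val_lt (((a : ZMod N))⁻¹)
          omega
      · intro a ha
        simp only [Finset.mem_Icc] at *
        constructor
        · have hne : ((a : ZMod N))⁻¹ ≠ 0 := by
            intro h0
            have := ZMod.mul_inv_of_unit _ (hunit a ha.1 ha.2)
            rw [h0, mul_zero] at this
            simp at this
          have := (ZMod.val_eq_zero (((a : ZMod N))⁻¹)).not.mpr hne
          omega
        · have := ZMod.val_lt (((a : ZMod N))⁻¹)
          omega
      · intro a ha
        simp only [Finset.mem_Icc] at ha
        show (((((((a : ZMod N))⁻¹).val : ℕ) : ZMod N))⁻¹).val = a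
        rw [ZMod.natCast_zmod_val, inv_inv, ZMod.val_natCast_of_lt (by omega)]
      · intro a ha
        simp only [Finset.mem_Icc] at ha
        show (((((((a : ZMod N))⁻¹).val : ℕ) : ZMod N))⁻¹).val = a
        rw [ZMod.natCast_zmod_val, inv_inv, ZMod.val_natCast_of_lt (by omega)]
      · intro a ha
        simp only [Finset.mem_Icc] at ha
        show dlog log (a : ZMod N) = - dlog log ((((((a : ZMod N))⁻¹).val : ℕ)) : ZMod N)
        rw [ZMod.natCast_zmod_val, dlog_inv log (hunit a ha.1 ha.2), neg_neg]
    rw [Finset.sum_neg_distrib] at key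
    linear_combination ((2 : ZMod (p ^ ν))⁻¹) * key
      - (∑ k ∈ Finset.Icc 1 (2 * n), dlog log (k : ZMod N)) * h2
  -- doubling properties
  have hdbl1 : ∀ k ∈ Finset.Icc 1 n,
      dlog log ((2 * k : ℕ) : ZMod N)
        = dlog log ((2 : ℕ) : ZMod N) + dlog log (k : ZMod N) := by
    intro k hk
    simp only [Finset.mem_Icc] at hk
    rw [show ((2 * k : ℕ) : ZMod N) = ((2 : ℕ) : ZMod N) * (k : ZMod N) from by push_cast; ring]
    exact dlog_mul log (hunit 2 (by omega) (by omega)) (hunit k (by omega) (by omega))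
  have hdbl2 : ∀ k ∈ Finset.Ioc n (2 * n),
      dlog log ((2 * k - (2 * n + 1) : ℕ) : ZMod N)
        = dlog log ((2 : ℕ) : ZMod N) + dlog log (k : ZMod N) := by
    intro k hk
    simp only [Finset.mem_Ioc] at hk
    have hcst : ((2 * k - (2 * n + 1) : ℕ) : ZMod N) = ((2 : ℕ) : ZMod N) * (k : ZMod N) := by
      rw [Nat.cast_sub (by omega), hN0]
      push_cast
      ring
    rw [hcst]
    exact dlog_mul log (hunit 2 (by omega) (by omega)) (hunit k (by omega) (by omega))
  -- sum of squares vanishes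
  have hC : ∑ k ∈ Finset.Icc 1 (2 * n), (k : ZMod (p ^ ν)) ^ 2 = 0 := by
    have hnat := six_mul_sum_sq (2 * n)
    have hcast := congrArg (fun m : ℕ => (m : ZMod (p ^ ν))) hnat
    push_cast at hcast
    rw [h2n] at hcast
    norm_num at hcast
    linear_combination ((2 : ZMod (p ^ ν))⁻¹ * (3 : ZMod (p ^ ν))⁻¹) * hcast
      - (∑ k ∈ Finset.Icc 1 (2 * n), (k : ZMod (p ^ ν)) ^ 2) * h2
      - (2 * (2 : ZMod (p ^ ν))⁻¹ * (∑ k ∈ Finset.Icc 1 (2 * n), (k : ZMod (p ^ ν)) ^ 2)) * h3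
  -- apply the key lemma
  rw [show N - 1 = 2 * n from by omega]
  exact key_lemma n (fun k : ℕ => dlog log (k : ZMod N))
    (dlog log ((2 : ℕ) : ZMod N)) ((2 : ZMod (p ^ ν))⁻¹) ((3 : ZMod (p ^ ν))⁻¹)
    hn1 hcastN hrefl hsum0 hdbl1 hdbl2 hC h2 h3
end

section
/- Let p be a prime, S a cyclic group of order p with generator σ, and δ = ∑_{i=0}^{p-1} [σ^i] in the group ring Z_p[S]. Then p belongs to the coset (([σ]-1)^{p-1} - δ)·Z_p[S]^×; i.e., there is a unit u of Z_p[S] with p = (([σ]-1)^{p-1} - δ)·u. -/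
open Finset

private lemma hockey {R : Type*} [CommRing R] (x : R) (n : ℕ) :
    ∑ i ∈ range n, (1 + x) ^ i = ∑ k ∈ range n, (n.choose (k + 1) : R) * x ^ k := by
  induction n with
  | zero => simp
  | succ n ih =>
    rw [Finset.sum_range_succ, ih]
    have h1 : (1 + x) ^ n = ∑ k ∈ range (n + 1), (n.choose k : R) * x ^ k := by
      rw [add_comm, add_pow]
      exact Finset.sum_congr rfl fun k _ => by ring
    rw [h1]
    have h2 : ∀ k ∈ range (n + 1), ((n + 1).choose (k + 1) : R) * x ^ k
        = (n.choose k : R) * x ^ k + (n.choose (k + 1) : R) * x ^ k := by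
      intro k _
      rw [Nat.choose_succ_succ]
      push_cast
      ring
    rw [Finset.sum_congr rfl h2, Finset.sum_add_distrib]
    have h3 : ∑ k ∈ range (n + 1), (n.choose (k + 1) : R) * x ^ k
        = ∑ k ∈ range n, (n.choose (k + 1) : R) * x ^ k := by
      rw [Finset.sum_range_succ, Nat.choose_succ_self]
      simp
    rw [h3]
    ring

/-- Let `p` be a prime, `S` a cyclic group of order `p` with generator `σ`, and
`δ = ∑_{i=0}^{p-1} [σ^i]` in the group ring `ℤ_p[S]`. Then `p` belongs to the coset
`(([σ]-1)^{p-1} - δ)·ℤ_p[S]ˣ`. -/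
theorem padic_groupRing_unit_coset (p : ℕ) [hp : Fact p.Prime]
    (S : Type) [Group S] [Fintype S] (hcard : Fintype.card S = p)
    (σ : S) (hσ : ∀ x : S, x ∈ Subgroup.zpowers σ) :
    ∃ u : (MonoidAlgebra ℤ_[p] S)ˣ,
      (p : MonoidAlgebra ℤ_[p] S) =
        ((MonoidAlgebra.of ℤ_[p] S σ - 1) ^ (p - 1)
            - ∑ i ∈ Finset.range p, MonoidAlgebra.of ℤ_[p] S (σ ^ i)) * u := by
  have hcyc : IsCyclic S := ⟨σ, hσ⟩
  letI : CommGroup S := IsCyclic.commGroup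
  letI : CommRing (MonoidAlgebra ℤ_[p] S) := inferInstance
  set T : MonoidAlgebra ℤ_[p] S := MonoidAlgebra.of ℤ_[p] S σ - 1 with hT
  have hp2 : 2 ≤ p := hp.out.two_le
  have hp1 : p - 1 + 1 = p := by omega
  have hrange : range p = range (p - 1 + 1) := by rw [hp1]
  have hrange2 : range (p - 1) = range (p - 2 + 1) := by
    congr 1; omega
  have hσp : σ ^ p = 1 := by rw [← hcard]; exact pow_card_eq_one
  have hof : MonoidAlgebra.of ℤ_[p] S σ = 1 + T := by rw [hT]; ring
  have hδ : ∑ i ∈ range p, MonoidAlgebra.of ℤ_[p] S (σ ^ i)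
      = ∑ k ∈ range p, (p.choose (k + 1) : MonoidAlgebra ℤ_[p] S) * T ^ k := by
    rw [← hockey]
    exact Finset.sum_congr rfl fun i _ => by rw [map_pow, hof]
  have hx : T ^ (p - 1) - ∑ i ∈ range p, MonoidAlgebra.of ℤ_[p] S (σ ^ i)
      = -∑ k ∈ range (p - 1), (p.choose (k + 1) : MonoidAlgebra ℤ_[p] S) * T ^ k := by
    rw [hδ, hrange, Finset.sum_range_succ, hp1, Nat.choose_self]
    push_cast
    ring
  have hdvd : ∀ k, k < p - 1 → p ∣ p.choose (k + 1) := fun k hk =>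
    hp.out.dvd_choose_self (Nat.succ_ne_zero k) (by omega)
  set y : MonoidAlgebra ℤ_[p] S :=
    -∑ k ∈ range (p - 1), ((p.choose (k + 1) / p : ℕ) : MonoidAlgebra ℤ_[p] S) * T ^ k with hy
  have hpy : (p : MonoidAlgebra ℤ_[p] S) * y
      = T ^ (p - 1) - ∑ i ∈ range p, MonoidAlgebra.of ℤ_[p] S (σ ^ i) := by
    rw [hx, hy, mul_neg, neg_inj, Finset.mul_sum]
    refine Finset.sum_congr rfl fun k hk => ?_
    rw [Finset.mem_range] at hk
    rw [← mul_assoc, ← Nat.cast_mul, Nat.mul_div_cancel' (hdvd k hk)]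
  have hTy : T ∣ y + 1 := by
    have h0 : ((p.choose (0 + 1) / p : ℕ) : MonoidAlgebra ℤ_[p] S) * T ^ 0 = 1 := by
      simp [Nat.choose_one_right, Nat.div_self (by omega : 0 < p)]
    rw [hy, hrange2, Finset.sum_range_succ', h0]
    refine ⟨-∑ k ∈ range (p - 2), ((p.choose (k + 1 + 1) / p : ℕ) : MonoidAlgebra ℤ_[p] S) * T ^ k, ?_⟩
    rw [mul_neg, Finset.mul_sum]
    have he : ∀ k ∈ range (p - 2),
        T * (((p.choose (k + 1 + 1) / p : ℕ) : MonoidAlgebra ℤ_[p] S) * T ^ k)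
        = ((p.choose (k + 1 + 1) / p : ℕ) : MonoidAlgebra ℤ_[p] S) * T ^ (k + 1) := by
      intro k _; ring
    rw [Finset.sum_congr rfl he]
    ring
  have hTp : (p : MonoidAlgebra ℤ_[p] S) ∣ T ^ p := by
    have h1 : (1 + T) ^ p = 1 := by
      rw [← hof, ← map_pow, hσp, map_one]
    have h2 : (1 + T) ^ p
        = ∑ k ∈ range (p + 1), (p.choose k : MonoidAlgebra ℤ_[p] S) * T ^ k := by
      rw [add_comm, add_pow]
      exact Finset.sum_congr rfl fun k _ => by ring
    have h3 : ∑ k ∈ range (p + 1), (p.choose k : MonoidAlgebra ℤ_[p] S) * T ^ k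
        = (∑ k ∈ range (p - 1), (p.choose (k + 1) : MonoidAlgebra ℤ_[p] S) * T ^ (k + 1))
          + 1 + T ^ p := by
      rw [Finset.sum_range_succ, Nat.choose_self, hrange, Finset.sum_range_succ',
        Nat.choose_zero_right]
      push_cast
      ring
    have h4 : T ^ p
        = -∑ k ∈ range (p - 1), (p.choose (k + 1) : MonoidAlgebra ℤ_[p] S) * T ^ (k + 1) := by
      have h5 := h2.symm.trans h1
      rw [h3] at h5
      linear_combination h5
    rw [h4]
    refine dvd_neg.mpr (Finset.dvd_sum fun k hk => ?_)
    rw [Finset.mem_range] at hk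
    obtain ⟨c, hc⟩ := hdvd k hk
    exact ⟨(c : MonoidAlgebra ℤ_[p] S) * T ^ (k + 1), by rw [hc]; push_cast; ring⟩
  have hyu : IsUnit y := by
    by_contra h
    obtain ⟨m, hm, hym⟩ := exists_max_ideal_of_mem_nonunits (mem_nonunits_iff.mpr h)
    have hfin : Module.Finite ℤ_[p] (MonoidAlgebra ℤ_[p] S) :=
      Module.Finite.equiv (MonoidAlgebra.coeffLinearEquiv ℤ_[p]).symm
    have hint : Algebra.IsIntegral ℤ_[p] (MonoidAlgebra ℤ_[p] S) :=
      Algebra.IsIntegral.of_finite _ _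
    have hcm : (Ideal.comap (algebraMap ℤ_[p] (MonoidAlgebra ℤ_[p] S)) m).IsMaximal :=
      Ideal.isMaximal_comap_of_isIntegral_of_isMaximal m
    have hpmem : (p : ℤ_[p]) ∈ Ideal.comap (algebraMap ℤ_[p] (MonoidAlgebra ℤ_[p] S)) m := by
      rw [IsLocalRing.eq_maximalIdeal hcm, PadicInt.maximalIdeal_eq_span_p]
      exact Ideal.mem_span_singleton.mpr dvd_rfl
    have hpm : (p : MonoidAlgebra ℤ_[p] S) ∈ m := by
      have h6 := Ideal.mem_comap.mp hpmem
      rwa [map_natCast] at h6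
    have hTm : T ∈ m := by
      refine hm.isPrime.mem_of_pow_mem p ?_
      obtain ⟨c, hc⟩ := hTp
      rw [hc]
      exact Ideal.mul_mem_right c m hpm
    have hy1m : y + 1 ∈ m := by
      obtain ⟨c, hc⟩ := hTy
      rw [hc]
      exact Ideal.mul_mem_right c m hTm
    have hone : (1 : MonoidAlgebra ℤ_[p] S) ∈ m := by
      have h7 := m.sub_mem hy1m hym
      simpa using h7
    exact hm.ne_top (Ideal.eq_top_of_isUnit_mem m hone isUnit_one)
  refine ⟨hyu.unit⁻¹, ?_⟩
  rw [← hpy, mul_assoc]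
  rw [hyu.mul_val_inv, mul_one]
end

section
/- Let p be an odd prime, T = (Z/pZ)^× acting on Z_p[T], ω : T → Z_p^× the Teichmüller character, and Δ = (1/(p-1))·∑_{τ∈T} ω(τ^{-1})·[σ_{ω(τ)}] interpreted in Z_p[T] (identifying σ_a with a). Then Δ generates the augmentation ideal of Z_p[T], and for every character ψ : T → Z_p^×, one has e_{ψ·ω}·Δ = Δ·e_ψ, where e_ψ = (1/(p-1))·∑_{τ∈T} ψ(τ^{-1})·[τ]. -/
/-- The twisted element `Δ = (1/(p-1))·∑_{τ∈T} ω(τ⁻¹)·[σ^{ω(τ)}]` of the group ring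
`ℤ_p[G]` (where `σ^{ω(τ)} = σ^{τ}` since `σ` has order `p` and `ω(τ) ≡ τ (mod p)`). -/
noncomputable def jaulentDelta (p : ℕ) [Fact p.Prime] {G : Type} [Group G]
    (ω : (ZMod p)ˣ →* ℤ_[p]ˣ) (σ : G) : MonoidAlgebra ℤ_[p] G :=
  Ring.inverse ((p : ℤ_[p]) - 1) •
    ∑ τ : (ZMod p)ˣ, ((ω τ⁻¹ : ℤ_[p]ˣ) : ℤ_[p]) •
      MonoidAlgebra.of ℤ_[p] G (σ ^ ((τ : ZMod p).val))

/-- The idempotent `e_ψ = (1/(p-1))·∑_{τ∈T} ψ(τ⁻¹)·[τ]` attached to a character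
`ψ : T → ℤ_p^×`, viewed in `ℤ_p[G]` through an embedding `ι : T → G`. -/
noncomputable def charIdem (p : ℕ) [Fact p.Prime] {G : Type} [Group G]
    (ι : (ZMod p)ˣ →* G) (ψ : (ZMod p)ˣ →* ℤ_[p]ˣ) : MonoidAlgebra ℤ_[p] G :=
  Ring.inverse ((p : ℤ_[p]) - 1) •
    ∑ τ : (ZMod p)ˣ, ((ψ τ⁻¹ : ℤ_[p]ˣ) : ℤ_[p]) • MonoidAlgebra.of ℤ_[p] G (ι τ)

section Helpers

open Finset

variable {p : ℕ} [hp : Fact p.Prime]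

lemma JD.padic_isUnit_iff (x : ℤ_[p]) : IsUnit x ↔ PadicInt.toZMod x ≠ 0 := by
  rw [← IsLocalRing.notMem_maximalIdeal, ← PadicInt.ker_toZMod, RingHom.mem_ker]

lemma JD.three_le (hodd : Odd p) : 3 ≤ p := by
  have h2 := hp.out.two_le
  rcases Nat.lt_or_ge p 3 with h | h
  · interval_cases p
    · exact absurd hodd (by decide)
  · exact h

lemma JD.char_sum_eq_zero (hodd : Odd p) (ω : (ZMod p)ˣ →* ℤ_[p]ˣ)
    (hω : ∀ a : (ZMod p)ˣ, PadicInt.toZMod ((ω a : ℤ_[p]ˣ) : ℤ_[p]) = (a : ZMod p)) :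
    ∑ τ : (ZMod p)ˣ, ((ω τ⁻¹ : ℤ_[p]ˣ) : ℤ_[p]) = 0 := by
  have h3 := JD.three_le hodd
  have hcard : 1 < Fintype.card (ZMod p)ˣ := by
    rw [ZMod.card_units_eq_totient, Nat.totient_prime hp.out]; omega
  obtain ⟨τ₀, hτ₀⟩ := Fintype.exists_ne_of_one_lt_card hcard 1
  have hne : ((ω τ₀ : ℤ_[p]ˣ) : ℤ_[p]) ≠ 1 := by
    intro h
    apply hτ₀
    have h2 := hω τ₀
    rw [h, map_one] at h2
    exact Units.ext (by simpa using h2.symm)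
  have key : ((ω τ₀ : ℤ_[p]ˣ) : ℤ_[p]) * ∑ τ : (ZMod p)ˣ, ((ω τ⁻¹ : ℤ_[p]ˣ) : ℤ_[p])
      = ∑ τ : (ZMod p)ˣ, ((ω τ⁻¹ : ℤ_[p]ˣ) : ℤ_[p]) := by
    rw [Finset.mul_sum]
    exact Fintype.sum_equiv (Equiv.mulRight τ₀⁻¹) _ _ (fun τ => by
      simp only [Equiv.coe_mulRight, mul_inv_rev, inv_inv, map_mul, Units.val_mul])
  have : (((ω τ₀ : ℤ_[p]ˣ) : ℤ_[p]) - 1) * ∑ τ : (ZMod p)ˣ, ((ω τ⁻¹ : ℤ_[p]ˣ) : ℤ_[p]) = 0 := by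
    rw [sub_mul, one_mul, key, sub_self]
  rcases mul_eq_zero.mp this with h | h
  · exact absurd (sub_eq_zero.mp h) hne
  · exact h

end Helpers

section UnitLift

open Finset

variable {p : ℕ} [hp : Fact p.Prime]

lemma JD.isUnit_of_isUnit_quotient_p {R : Type} [CommRing R] [Algebra ℤ_[p] R]
    [Module.Finite ℤ_[p] R] (u : R)
    (h : IsUnit (Ideal.Quotient.mk (Ideal.span {((p : ℕ) : R)}) u)) : IsUnit u := by
  classical
  obtain ⟨b, hb⟩ := h.exists_right_inv
  obtain ⟨v, rfl⟩ := Ideal.Quotient.mk_surjective b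
  have hmem : u * v - 1 ∈ Ideal.span {((p : ℕ) : R)} := by
    rw [← Ideal.Quotient.eq_zero_iff_mem, map_sub, map_mul, map_one, hb, sub_self]
  obtain ⟨r, hr⟩ := Ideal.mem_span_singleton'.mp hmem
  set J : Ideal R := Ideal.span {u} with hJ
  haveI : Module.Finite ℤ_[p] (R ⧸ J) :=
    Module.Finite.of_surjective (Ideal.Quotient.mkₐ ℤ_[p] J).toLinearMap
      (Ideal.Quotient.mkₐ_surjective ℤ_[p] J)
  have htop : (⊤ : Submodule ℤ_[p] (R ⧸ J)) ≤ (Ideal.span {((p : ℕ) : ℤ_[p])}) • ⊤ := by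
    rintro x -
    obtain ⟨y, rfl⟩ := Ideal.Quotient.mk_surjective x
    have h1 : u * (v * y) - ((p : ℕ) : R) * (r * y) = y := by
      have h2 : u * v - r * (((p : ℕ)) : R) = 1 := by linear_combination -hr
      calc u * (v * y) - ((p : ℕ) : R) * (r * y) = (u * v - r * ((p : ℕ) : R)) * y := by ring
        _ = 1 * y := by rw [h2]
        _ = y := one_mul y
    have h0 : Ideal.Quotient.mk J (u * (v * y)) = 0 :=
      Ideal.Quotient.eq_zero_iff_mem.mpr (Ideal.mul_mem_right _ _ (Ideal.subset_span rfl))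
    have hsm : (((p : ℕ) : R) * (r * y)) = ((p : ℕ) : ℤ_[p]) • (r * y) := by
      rw [Algebra.smul_def, map_natCast]
    have hmk : Ideal.Quotient.mk J y = ((p : ℕ) : ℤ_[p]) • (- Ideal.Quotient.mk J (r * y)) := by
      conv_lhs => rw [← h1]
      rw [map_sub, h0, zero_sub, hsm,
        show (Ideal.Quotient.mk J) (((p : ℕ) : ℤ_[p]) • (r * y))
            = ((p : ℕ) : ℤ_[p]) • Ideal.Quotient.mk J (r * y)
          from map_smul (Ideal.Quotient.mkₐ ℤ_[p] J) _ _, smul_neg]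
    rw [hmk]
    exact Submodule.smul_mem_smul (Ideal.subset_span rfl) Submodule.mem_top
  have hjac : (Ideal.span {((p : ℕ) : ℤ_[p])}) ≤ Ideal.jacobson (⊥ : Ideal ℤ_[p]) := by
    rw [IsLocalRing.jacobson_eq_maximalIdeal (⊥ : Ideal ℤ_[p]) bot_ne_top,
      PadicInt.maximalIdeal_eq_span_p]
  have hbot := Submodule.eq_bot_of_le_smul_of_le_jacobson_bot (Ideal.span {((p : ℕ) : ℤ_[p])})
      ⊤ (Module.finite_def.mp inferInstance) htop hjac
  have h1J : (1 : R) ∈ J := by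
    have hz : ((Ideal.Quotient.mk J) 1 : R ⧸ J) ∈ (⊥ : Submodule ℤ_[p] (R ⧸ J)) :=
      hbot ▸ Submodule.mem_top
    exact Ideal.Quotient.eq_zero_iff_mem.mp (by simpa using hz)
  have : J = ⊤ := (Ideal.eq_top_iff_one J).mpr h1J
  exact Ideal.span_singleton_eq_top.mp (hJ ▸ this)

end UnitLift

section Part1

open Finset

variable {p : ℕ} [hp : Fact p.Prime]

lemma JD.part1 {H : Type} [CommGroup H] [Finite H] (hodd : Odd p)
    (ω : (ZMod p)ˣ →* ℤ_[p]ˣ)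
    (hω : ∀ a : (ZMod p)ˣ, PadicInt.toZMod ((ω a : ℤ_[p]ˣ) : ℤ_[p]) = (a : ZMod p))
    (s : H) (hs : orderOf s = p) (hgen : ∀ g : H, ∃ k : ℕ, g = s ^ k) :
    Ideal.span {jaulentDelta p ω s}
      = RingHom.ker ((MonoidAlgebra.lift ℤ_[p] ℤ_[p] H) 1).toRingHom := by
  classical
  haveI : Fact (1 < p) := ⟨hp.out.one_lt⟩
  set E := (MonoidAlgebra.lift ℤ_[p] ℤ_[p] H) 1 with hE
  have hEof : ∀ g : H, E (MonoidAlgebra.of ℤ_[p] H g) = 1 := fun g => by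
    rw [hE, MonoidAlgebra.lift_of]; rfl
  set c : ℤ_[p] := Ring.inverse ((p : ℤ_[p]) - 1) with hc
  have hsum0 : ∑ τ : (ZMod p)ˣ, ((ω τ⁻¹ : ℤ_[p]ˣ) : ℤ_[p]) = 0 := JD.char_sum_eq_zero hodd ω hω
  set u : MonoidAlgebra ℤ_[p] H := c • ∑ τ : (ZMod p)ˣ, ((ω τ⁻¹ : ℤ_[p]ˣ) : ℤ_[p]) •
      (∑ i ∈ Finset.range ((τ : ZMod p).val), (MonoidAlgebra.of ℤ_[p] H s) ^ i) with hu
  -- Δ = (of s - 1) * u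
  have hΔ : jaulentDelta p ω s = (MonoidAlgebra.of ℤ_[p] H s - 1) * u := by
    rw [jaulentDelta, hu, mul_smul_comm, Finset.mul_sum]
    congr 1
    have hterm : ∀ τ : (ZMod p)ˣ, (MonoidAlgebra.of ℤ_[p] H s - 1) *
        (((ω τ⁻¹ : ℤ_[p]ˣ) : ℤ_[p]) •
          ∑ i ∈ Finset.range ((τ : ZMod p).val), (MonoidAlgebra.of ℤ_[p] H s) ^ i)
        = ((ω τ⁻¹ : ℤ_[p]ˣ) : ℤ_[p]) • MonoidAlgebra.of ℤ_[p] H (s ^ (τ : ZMod p).val)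
          - ((ω τ⁻¹ : ℤ_[p]ˣ) : ℤ_[p]) • 1 := by
      intro τ
      rw [mul_smul_comm, mul_geom_sum, smul_sub, map_pow]
    rw [Finset.sum_congr rfl (fun τ _ => hterm τ), Finset.sum_sub_distrib,
      ← Finset.sum_smul, hsum0, zero_smul, sub_zero]
  -- E Δ = 0
  have hEΔ : E (jaulentDelta p ω s) = 0 := by
    rw [hΔ, map_mul, map_sub, hEof, map_one, sub_self, zero_mul]
  -- every of g - 1 lies in span {of s - 1}
  have hofg : ∀ g : H, MonoidAlgebra.of ℤ_[p] H g - 1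
      ∈ Ideal.span {MonoidAlgebra.of ℤ_[p] H s - 1} := by
    intro g
    obtain ⟨k, rfl⟩ := hgen g
    rw [map_pow, ← geom_sum_mul]
    exact Ideal.mul_mem_left _ _ (Ideal.subset_span rfl)
  -- augmentation decomposition
  have haug : ∀ x : MonoidAlgebra ℤ_[p] H,
      x - E x • 1 ∈ Ideal.span {MonoidAlgebra.of ℤ_[p] H s - 1} := by
    intro x
    refine MonoidAlgebra.induction_on
      (motive := fun y => y - E y • (1 : MonoidAlgebra ℤ_[p] H)
        ∈ Ideal.span {MonoidAlgebra.of ℤ_[p] H s - 1}) x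
      (fun g => ?_) (fun f g hf hg => ?_) (fun r f hf => ?_)
    · rw [hEof, one_smul]; exact hofg g
    · have h := Ideal.add_mem _ hf hg
      have heq : f + g - E (f + g) • (1 : MonoidAlgebra ℤ_[p] H)
          = (f - E f • 1) + (g - E g • 1) := by
        rw [map_add, add_smul]; abel
      rw [heq]; exact h
    · have heq : r • f - E (r • f) • (1 : MonoidAlgebra ℤ_[p] H) = r • (f - E f • 1) := by
        rw [map_smul, smul_assoc, smul_sub]
      rw [heq, Algebra.smul_def]
      exact Ideal.mul_mem_left _ _ hf
  -- E u is a unit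
  have hEgeom : ∀ τ : (ZMod p)ˣ,
      E (∑ i ∈ Finset.range ((τ : ZMod p).val), (MonoidAlgebra.of ℤ_[p] H s) ^ i)
        = (((τ : ZMod p).val : ℕ) : ℤ_[p]) := by
    intro τ
    rw [map_sum]
    have h1 : ∀ i : ℕ, E ((MonoidAlgebra.of ℤ_[p] H s) ^ i) = 1 := fun i => by
      rw [map_pow, hEof, one_pow]
    rw [Finset.sum_congr rfl (fun i _ => h1 i), Finset.sum_const, Finset.card_range,
      nsmul_eq_mul, mul_one]
  have hEu : E u = c * ∑ τ : (ZMod p)ˣ,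
      ((ω τ⁻¹ : ℤ_[p]ˣ) : ℤ_[p]) * (((τ : ZMod p).val : ℕ) : ℤ_[p]) := by
    rw [hu, map_smul, map_sum, smul_eq_mul]
    congr 1
    refine Finset.sum_congr rfl (fun τ _ => ?_)
    rw [map_smul, hEgeom, smul_eq_mul]
  have hpm1 : PadicInt.toZMod ((p : ℤ_[p]) - 1) = -1 := by
    rw [map_sub, map_natCast, map_one, ZMod.natCast_self, zero_sub]
  have hcunit : PadicInt.toZMod c * (-1) = 1 := by
    rw [← hpm1, hc, ← map_mul, Ring.inverse_mul_cancel _ ?_, map_one]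
    rw [JD.padic_isUnit_iff, hpm1]
    simp
  have hEuUnit : IsUnit (E u) := by
    rw [JD.padic_isUnit_iff, hEu, map_mul]
    have hsum : PadicInt.toZMod (∑ τ : (ZMod p)ˣ,
        ((ω τ⁻¹ : ℤ_[p]ˣ) : ℤ_[p]) * (((τ : ZMod p).val : ℕ) : ℤ_[p])) = -1 := by
      rw [map_sum]
      have h1 : ∀ τ : (ZMod p)ˣ, PadicInt.toZMod
          (((ω τ⁻¹ : ℤ_[p]ˣ) : ℤ_[p]) * (((τ : ZMod p).val : ℕ) : ℤ_[p])) = 1 := by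
        intro τ
        rw [map_mul, hω, map_natCast]
        rw [show ((((τ : ZMod p).val : ℕ)) : ZMod p) = ((τ : (ZMod p)ˣ) : ZMod p) by
          rw [ZMod.natCast_val, ZMod.cast_id]]
        rw [← Units.val_mul, inv_mul_cancel, Units.val_one]
      rw [Finset.sum_congr rfl (fun τ _ => h1 τ), Finset.sum_const, nsmul_eq_mul, mul_one,
        Finset.card_univ, ZMod.card_units_eq_totient, Nat.totient_prime hp.out,
        Nat.cast_sub hp.out.one_le, ZMod.natCast_self, Nat.cast_one, zero_sub]
    rw [hsum]
    intro hzero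
    exact one_ne_zero (α := ZMod p) (by rw [← hcunit]; exact hzero)
  -- u is a unit
  haveI hfin : Module.Finite ℤ_[p] (MonoidAlgebra ℤ_[p] H) :=
    Module.Finite.equiv (MonoidAlgebra.coeffLinearEquiv ℤ_[p]).symm
  have huUnit : IsUnit u := by
    set I : Ideal (MonoidAlgebra ℤ_[p] H) :=
      Ideal.span {((p : ℕ) : MonoidAlgebra ℤ_[p] H)} with hI
    set π := Ideal.Quotient.mk I with hπ
    haveI : CharP (MonoidAlgebra ℤ_[p] H ⧸ I) p := by
      apply CharP.quotient
      rw [mem_nonunits_iff]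
      intro hPu
      have h2 : IsUnit ((p : ℕ) : ℤ_[p]) := by
        have h3 := hPu.map E.toRingHom
        rwa [map_natCast] at h3
      rw [JD.padic_isUnit_iff, map_natCast, ZMod.natCast_self] at h2
      exact h2 rfl
    have hq : IsUnit (π u) := by
      have h5 : s ^ p = 1 := hs ▸ pow_orderOf_eq_one s
      have hnil : IsNilpotent (π (MonoidAlgebra.of ℤ_[p] H s - 1)) := by
        refine ⟨p, ?_⟩
        have h4 : (π (MonoidAlgebra.of ℤ_[p] H s) - 1) ^ p
            = π (MonoidAlgebra.of ℤ_[p] H s) ^ p - 1 ^ p := sub_pow_char _ _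
        rw [map_sub, map_one, h4, one_pow, ← map_pow, ← map_pow, h5, map_one, map_one, sub_self]
      obtain ⟨z, hz⟩ := Ideal.mem_span_singleton'.mp (haug u)
      have hudecomp : u = E u • 1 + z * (MonoidAlgebra.of ℤ_[p] H s - 1) := by
        rw [hz]; abel
      have h1 : IsUnit (π (E u • (1 : MonoidAlgebra ℤ_[p] H))) := by
        have heq : (E u • (1 : MonoidAlgebra ℤ_[p] H))
            = algebraMap ℤ_[p] (MonoidAlgebra ℤ_[p] H) (E u) := by
          rw [Algebra.smul_def, mul_one]
        rw [heq]
        simpa using hEuUnit.map (π.comp (algebraMap ℤ_[p] (MonoidAlgebra ℤ_[p] H)))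
      have h2 : IsNilpotent (π (z * (MonoidAlgebra.of ℤ_[p] H s - 1))) := by
        rw [map_mul]
        exact (Commute.all _ _).isNilpotent_mul_left hnil
      rw [hudecomp, map_add]
      exact IsNilpotent.isUnit_add_left_of_commute h2 h1 (Commute.all _ _)
    exact JD.isUnit_of_isUnit_quotient_p u hq
  -- conclude
  obtain ⟨w, hw⟩ := huUnit.exists_right_inv
  apply le_antisymm
  · rw [Ideal.span_le, Set.singleton_subset_iff]
    show jaulentDelta p ω s ∈ RingHom.ker _
    rw [RingHom.mem_ker]
    exact hEΔ
  · intro x hx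
    rw [RingHom.mem_ker] at hx
    have hx0 : E x = 0 := hx
    have h1 : x ∈ Ideal.span {MonoidAlgebra.of ℤ_[p] H s - 1} := by
      have h2 := haug x
      rwa [hx0, zero_smul, sub_zero] at h2
    have hle : Ideal.span {MonoidAlgebra.of ℤ_[p] H s - 1} ≤ Ideal.span {jaulentDelta p ω s} := by
      rw [Ideal.span_le, Set.singleton_subset_iff]
      have heq : MonoidAlgebra.of ℤ_[p] H s - 1 = jaulentDelta p ω s * w := by
        rw [hΔ, mul_assoc, hw, mul_one]
      rw [heq]
      exact Ideal.mul_mem_right _ _ (Ideal.subset_span rfl)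
    exact hle h1

end Part1

section Part2

open Finset

variable {p : ℕ} [hp : Fact p.Prime]

lemma JD.part2 {G : Type} [Group G] (σ : G) (hord : orderOf σ = p)
    (ω ψ : (ZMod p)ˣ →* ℤ_[p]ˣ) (ι : (ZMod p)ˣ →* G)
    (hconj : ∀ τ : (ZMod p)ˣ, ι τ * σ * (ι τ)⁻¹ = σ ^ ((τ : ZMod p).val)) :
    charIdem p ι (ψ * ω) * jaulentDelta p ω σ = jaulentDelta p ω σ * charIdem p ι ψ := by
  classical
  have hconj' : ∀ (τ : (ZMod p)ˣ) (k : ℕ), ι τ * σ ^ k = σ ^ ((τ : ZMod p).val * k) * ι τ := by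
    intro τ k
    have h1 : ι τ * σ ^ k * (ι τ)⁻¹ = σ ^ ((τ : ZMod p).val * k) := by
      rw [← conj_pow, hconj, ← pow_mul]
    rw [← h1, inv_mul_cancel_right]
  have key : ∀ (τ υ : (ZMod p)ˣ), ι τ * σ ^ ((υ : ZMod p).val)
      = σ ^ (((τ * υ : (ZMod p)ˣ) : ZMod p).val) * ι τ := by
    intro τ υ
    rw [hconj']
    congr 1
    rw [pow_eq_pow_iff_modEq, hord]
    show ((τ : ZMod p).val * (υ : ZMod p).val) % p = (((τ * υ : (ZMod p)ˣ) : ZMod p).val) % p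
    rw [Units.val_mul, ZMod.val_mul, Nat.mod_mod_of_dvd _ dvd_rfl]
  rw [charIdem, charIdem, jaulentDelta, smul_mul_assoc, mul_smul_comm, smul_mul_assoc,
    mul_smul_comm]
  refine congrArg (HSMul.hSMul _) ?_
  refine congrArg (HSMul.hSMul _) ?_
  rw [Finset.sum_mul_sum, Finset.sum_mul_sum]
  conv_rhs => rw [Finset.sum_comm]
  refine Finset.sum_congr rfl (fun τ _ => ?_)
  refine Fintype.sum_equiv (Equiv.mulLeft τ) _ _ (fun υ => ?_)
  simp only [Equiv.coe_mulLeft]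
  rw [smul_mul_smul_comm, smul_mul_smul_comm, ← map_mul, ← map_mul, key τ υ]
  show ((((ψ * ω) τ⁻¹ : ℤ_[p]ˣ) : ℤ_[p]) * ((ω υ⁻¹ : ℤ_[p]ˣ) : ℤ_[p])) •
      MonoidAlgebra.of ℤ_[p] G (σ ^ (((τ * υ : (ZMod p)ˣ) : ZMod p).val) * ι τ)
    = (((ω (τ * υ)⁻¹ : ℤ_[p]ˣ) : ℤ_[p]) * ((ψ τ⁻¹ : ℤ_[p]ˣ) : ℤ_[p])) •
      MonoidAlgebra.of ℤ_[p] G (σ ^ (((τ * υ : (ZMod p)ˣ) : ZMod p).val) * ι τ)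
  congr 1
  rw [MonoidHom.mul_apply, mul_inv_rev, map_mul, Units.val_mul, Units.val_mul]
  ring

end Part2

/-- Let `p` be an odd prime, `T = (Z/pZ)ˣ`, `ω` the Teichmüller character,
`σ` of order `p` on which `T` acts by conjugation via `τστ⁻¹ = σ^τ`.
Then `Δ` generates the augmentation ideal of `ℤ_p[S]` (`S = ⟨σ⟩` cyclic of order `p`),
and for every character `ψ : T → ℤ_p^×` one has `e_{ψ·ω}·Δ = Δ·e_ψ`. -/
theorem jaulentDelta_generates_and_shifts (p : ℕ) [hp : Fact p.Prime] (hodd : Odd p)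
    (ω : (ZMod p)ˣ →* ℤ_[p]ˣ)
    (hω : ∀ a : (ZMod p)ˣ, PadicInt.toZMod ((ω a : ℤ_[p]ˣ) : ℤ_[p]) = (a : ZMod p))
    (G : Type) [Group G] (σ : G) (hord : orderOf σ = p)
    (ι : (ZMod p)ˣ →* G) (hι : Function.Injective ι)
    (hconj : ∀ τ : (ZMod p)ˣ, ι τ * σ * (ι τ)⁻¹ = σ ^ ((τ : ZMod p).val)) :
    (Ideal.span {jaulentDelta p ω (⟨σ, Subgroup.mem_zpowers σ⟩ : Subgroup.zpowers σ)}
        = RingHom.ker ((MonoidAlgebra.lift ℤ_[p] ℤ_[p] (Subgroup.zpowers σ)) 1).toRingHom)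
      ∧ ∀ ψ : (ZMod p)ˣ →* ℤ_[p]ˣ,
          charIdem p ι (ψ * ω) * jaulentDelta p ω σ
            = jaulentDelta p ω σ * charIdem p ι ψ := by
  have hfo : IsOfFinOrder σ := by
    rw [← orderOf_pos_iff, hord]
    exact hp.out.pos
  haveI : Finite (Subgroup.zpowers σ) := hfo.finite_zpowers
  set s : Subgroup.zpowers σ := ⟨σ, Subgroup.mem_zpowers σ⟩ with hsdef
  have hords : orderOf s = p := by
    rw [Subgroup.orderOf_mk, hord]
  have hgen : ∀ g : Subgroup.zpowers σ, ∃ k : ℕ, g = s ^ k := by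
    rintro ⟨g, hg⟩
    obtain ⟨n, hn⟩ := Subgroup.mem_zpowers_iff.mp hg
    refine ⟨(n % (p : ℤ)).toNat, ?_⟩
    have hp0 : (0 : ℤ) < (p : ℤ) := by exact_mod_cast hp.out.pos
    have hnn : 0 ≤ n % (p : ℤ) := Int.emod_nonneg n (by positivity)
    have h1 : σ ^ ((n % (p : ℤ)).toNat : ℤ) = σ ^ n := by
      rw [Int.toNat_of_nonneg hnn, ← hord, zpow_mod_orderOf]
    apply Subtype.ext
    show g = (s ^ (n % (p : ℤ)).toNat : Subgroup.zpowers σ)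
    rw [SubmonoidClass.coe_pow]
    show g = σ ^ (n % (p : ℤ)).toNat
    rw [← zpow_natCast, h1, hn]
  open scoped IsMulCommutative in
  exact ⟨JD.part1 hodd ω hω s hords hgen, fun ψ => JD.part2 σ hord ω ψ ι hconj⟩
end

section
/- Let N and p be primes with p | N-1, a an integer with 1 ≤ a ≤ p-1, and X any set of integer representatives of (Z/NZ)^× all congruent to 1 mod p. Then Γ_N(1 - a/p) ≡ ± (a/p)^{a(N-1)/p} · ∏_{x∈X} x^{⌊ax/(Np)⌋ + ⌊a(N-x)/(Np)⌋ + 1} (mod N), where Γ_N is Morita's N-adic Gamma function and a/p is computed in Z_N. -/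
open Finset

private def gfun (N : ℕ) (i : ℕ) : ZMod N := if Nat.gcd i N = 1 then (i : ZMod N) else 1

private lemma gfun_shift (N : ℕ) (i : ℕ) : gfun N (i + N) = gfun N i := by
  unfold gfun
  simp only [Nat.gcd_add_self_left]
  split_ifs with h
  · push_cast
    simp
  · rfl

private lemma filter_coprime_eq (N : ℕ) [hN : Fact N.Prime] (t : ℕ) (ht : t ≤ N) :
    (Finset.range t).filter (fun i => Nat.gcd i N = 1) = Finset.Ico 1 t := by
  ext i
  simp only [mem_filter, mem_range, mem_Ico]
  constructor
  · rintro ⟨hi, hg⟩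
    refine ⟨?_, hi⟩
    rcases Nat.eq_zero_or_pos i with h0 | h1
    · subst h0
      simp only [Nat.gcd_zero_left] at hg
      exact absurd hg (by have := hN.out.two_le; omega)
    · exact h1
  · rintro ⟨h1, h2⟩
    refine ⟨h2, ?_⟩
    have : ¬ N ∣ i := Nat.not_dvd_of_pos_of_lt h1 (lt_of_lt_of_le h2 ht)
    have := (Nat.Prime.coprime_iff_not_dvd hN.out).mpr this
    exact Nat.coprime_comm.mp this

private lemma gfun_block (N : ℕ) [hN : Fact N.Prime] (n : ℕ) :
    ∏ i ∈ Finset.range N, gfun N (n + i) = -1 := by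
  have hN1 : 1 ≤ N := hN.out.one_lt.le
  induction n with
  | zero =>
    simp only [Nat.zero_add]
    have : ∏ i ∈ Finset.range N, gfun N i
        = ∏ i ∈ (Finset.range N).filter (fun i => Nat.gcd i N = 1), (i : ZMod N) := by
      rw [Finset.prod_filter]; rfl
    rw [this, filter_coprime_eq N N le_rfl, ZMod.prod_Ico_one_prime]
  | succ n ih =>
    have h1 : ∏ i ∈ Finset.range N, gfun N (n + 1 + i)
        = ∏ i ∈ Finset.Ico 1 (N + 1), gfun N (n + i) := by
      rw [Finset.prod_Ico_eq_prod_range]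
      simp only [Nat.add_sub_cancel]
      refine Finset.prod_congr rfl fun i _ => ?_
      congr 1
      omega
    have h2 : ∏ i ∈ Finset.Ico 1 (N + 1), gfun N (n + i)
        = (∏ i ∈ Finset.Ico 1 N, gfun N (n + i)) * gfun N (n + N) :=
      Finset.prod_Ico_succ_top hN1 _
    have h3 : ∏ i ∈ Finset.range N, gfun N (n + i)
        = gfun N n * ∏ i ∈ Finset.Ico 1 N, gfun N (n + i) := by
      rw [Finset.range_eq_Ico]
      rw [Finset.prod_eq_prod_Ico_succ_bot (by omega : 0 < N)]
      simp
    rw [h1, h2, gfun_shift] at *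
    rw [← ih, h3]
    ring

private lemma gfun_blocks (N : ℕ) [hN : Fact N.Prime] (t c : ℕ) :
    ∏ i ∈ Finset.range (t + c * N), gfun N i = (-1) ^ c * ∏ i ∈ Finset.range t, gfun N i := by
  induction c with
  | zero => simp
  | succ c ih =>
    have : t + (c + 1) * N = (t + c * N) + N := by ring
    rw [this, Finset.prod_range_add, ih, gfun_block]
    ring

private lemma prod_coprime_range (N : ℕ) [hN : Fact N.Prime] (M c : ℕ) (hM : M + 1 ≤ N) :
    ∏ i ∈ (Finset.range ((M + 1) + c * N)).filter (fun i => Nat.gcd i N = 1), (i : ZMod N)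
      = (-1) ^ c * ((Nat.factorial M) : ZMod N) := by
  have : ∏ i ∈ (Finset.range ((M + 1) + c * N)).filter (fun i => Nat.gcd i N = 1), (i : ZMod N)
      = ∏ i ∈ Finset.range ((M + 1) + c * N), gfun N i := by
    rw [Finset.prod_filter]; rfl
  rw [this, gfun_blocks]
  congr 1
  have : ∏ i ∈ Finset.range (M + 1), gfun N i
      = ∏ i ∈ (Finset.range (M + 1)).filter (fun i => Nat.gcd i N = 1), (i : ZMod N) := by
    rw [Finset.prod_filter]; rfl
  rw [this, filter_coprime_eq N (M + 1) hM, ← Nat.cast_prod, Finset.prod_Ico_id_eq_factorial]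


private lemma dvd_pow_sub_one {N p : ℕ} (hN : 1 ≤ N) (hdvd : p ∣ N - 1) (k : ℕ) :
    p ∣ N ^ k - 1 := by
  induction k with
  | zero => simp
  | succ k ih =>
    have h1 : 1 ≤ N ^ k := Nat.one_le_pow _ _ (by omega)
    have h2 : N ^ (k + 1) - 1 = N * (N ^ k - 1) + (N - 1) := by
      have h0 : N * N ^ k = N ^ (k + 1) := by ring
      have h3 : N * (N ^ k - 1) = N * N ^ k - N * 1 := Nat.mul_sub N _ _
      have h4 : N ≤ N * N ^ k := Nat.le_mul_of_pos_right N (by omega)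
      omega
    rw [h2]
    exact Nat.dvd_add (Dvd.dvd.mul_left ih N) hdvd

private lemma step_A (N p : ℕ) [hNp : Fact N.Prime] (hp : p.Prime) (hdvd : p ∣ N - 1)
    (a : ℕ) (ha1 : 1 ≤ a)
    (Γ : ℤ_[N] → ℤ_[N]) (hΓcont : Continuous Γ)
    (q : ℤ_[N]) (hq : (p : ℤ_[N]) * q = (a : ℤ_[N])) :
    ∃ k : ℕ, 1 ≤ k ∧ 2 ≤ 1 + a * (N ^ k - 1) / p ∧
      PadicInt.toZMod (Γ (1 - q)) = PadicInt.toZMod (Γ ((1 + a * (N ^ k - 1) / p : ℕ) : ℤ_[N])) := by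
  have hN2 : 2 ≤ N := hNp.out.two_le
  have hN1' : 1 ≤ N - 1 := by omega
  have hpN : p ≤ N - 1 := Nat.le_of_dvd (by omega) hdvd
  have hp0 : 0 < p := hp.pos
  -- continuity
  obtain ⟨δ, hδ0, hδ⟩ := Metric.continuous_iff.mp hΓcont (1 - q) 1 one_pos
  have hinvlt : (N : ℝ)⁻¹ < 1 := by
    rw [inv_lt_one_iff₀]
    right
    exact_mod_cast by omega
  obtain ⟨n, hn⟩ := exists_pow_lt_of_lt_one hδ0 hinvlt
  set k := n + 1 with hk
  have hk1 : 1 ≤ k := by omega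
  have hNk : ((N : ℝ)⁻¹) ^ k < δ := by
    calc ((N : ℝ)⁻¹) ^ k = ((N : ℝ)⁻¹) ^ n * (N : ℝ)⁻¹ := pow_succ _ _
    _ ≤ ((N : ℝ)⁻¹) ^ n * 1 := by
        apply mul_le_mul_of_nonneg_left _ (pow_nonneg (by positivity) _)
        exact hinvlt.le
    _ = ((N : ℝ)⁻¹) ^ n := mul_one _
    _ < δ := hn
  set m := 1 + a * (N ^ k - 1) / p with hm
  have hpd : p ∣ a * (N ^ k - 1) := (dvd_pow_sub_one (by omega) hdvd k).mul_left a
  have h1k : 1 ≤ N ^ k := Nat.one_le_pow _ _ (by omega)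
  have hNk1 : N - 1 ≤ N ^ k - 1 := by
    have : N = N ^ 1 := (pow_one N).symm
    have := Nat.pow_le_pow_right (by omega : 1 ≤ N) hk1
    simp only [pow_one] at this
    omega
  have hm2 : 2 ≤ m := by
    have : p ≤ a * (N ^ k - 1) := le_trans (le_trans hpN hNk1)
      (Nat.le_mul_of_pos_left _ (by omega))
    have := Nat.le_div_iff_mul_le hp0 |>.mpr (by omega : 1 * p ≤ a * (N ^ k - 1))
    omega
  have hnat : p * m + a = p + a * N ^ k := by
    have h5 : p * (a * (N ^ k - 1) / p) = a * (N ^ k - 1) := Nat.mul_div_cancel' hpd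
    have h6 : a * (N ^ k - 1) + a = a * N ^ k := by
      have : a * (N ^ k - 1) + a * 1 = a * (N ^ k - 1 + 1) := (Nat.mul_add a _ _).symm
      rw [Nat.mul_one] at this
      rw [this, Nat.sub_add_cancel h1k]
    calc p * m + a = p + p * (a * (N ^ k - 1) / p) + a := by rw [hm]; ring
    _ = p + (a * (N ^ k - 1) + a) := by rw [h5]; ring
    _ = p + a * N ^ k := by rw [h6]
  have hcast : (p : ℤ_[N]) * (m : ℤ_[N]) + (a : ℤ_[N])
      = (p : ℤ_[N]) + (a : ℤ_[N]) * (N : ℤ_[N]) ^ k := by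
    have := congrArg (fun t : ℕ => (t : ℤ_[N])) hnat
    push_cast at this
    linear_combination this
  have hpm : (p : ℤ_[N]) * ((m : ℤ_[N]) - (1 - q)) = (a : ℤ_[N]) * (N : ℤ_[N]) ^ k := by
    linear_combination hcast + hq
  have hpnorm : ‖(p : ℤ_[N])‖ = 1 := by
    rcases lt_or_eq_of_le (PadicInt.norm_le_one (p : ℤ_[N])) with h | h
    · exfalso
      have h2 : ‖((p : ℤ) : ℤ_[N])‖ < 1 := by push_cast; exact h
      have h3 := (PadicInt.norm_int_lt_one_iff_dvd (p := N) (p : ℤ)).mp h2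
      have h4 : (N : ℤ) ≤ (p : ℤ) := Int.le_of_dvd (by exact_mod_cast hp0) h3
      omega
    · exact h
  have hnorm : ‖(m : ℤ_[N]) - (1 - q)‖ < δ := by
    have h1 : ‖(m : ℤ_[N]) - (1 - q)‖ = ‖(a : ℤ_[N]) * (N : ℤ_[N]) ^ k‖ := by
      rw [← hpm, norm_mul, hpnorm, one_mul]
    rw [h1]
    calc ‖(a : ℤ_[N]) * (N : ℤ_[N]) ^ k‖ = ‖(a : ℤ_[N])‖ * ‖(N : ℤ_[N])‖ ^ k := by
          rw [norm_mul, norm_pow]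
    _ ≤ 1 * ‖(N : ℤ_[N])‖ ^ k := by
        apply mul_le_mul_of_nonneg_right (PadicInt.norm_le_one _) (by positivity)
    _ = ((N : ℝ)⁻¹) ^ k := by rw [one_mul, PadicInt.norm_p]
    _ < δ := hNk
  have hdist := hδ (m : ℤ_[N]) (by rwa [dist_eq_norm])
  rw [dist_eq_norm] at hdist
  have hdvd2 : (N : ℤ_[N]) ∣ (Γ (m : ℤ_[N]) - Γ (1 - q)) :=
    (PadicInt.norm_lt_one_iff_dvd _).mp hdist
  have hker : PadicInt.toZMod (Γ (m : ℤ_[N]) - Γ (1 - q)) = 0 := by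
    rw [← RingHom.mem_ker, PadicInt.ker_toZMod, PadicInt.maximalIdeal_eq_span_p,
      Ideal.mem_span_singleton]
    exact hdvd2
  rw [map_sub, sub_eq_zero] at hker
  exact ⟨k, hk1, hm2, hker.symm⟩

private lemma decomp (N p a k : ℕ) (hN : 2 ≤ N) (hdvd : p ∣ N - 1) (hp0 : 0 < p)
    (hk : 1 ≤ k) :
    ∃ c : ℕ, 1 + a * (N ^ k - 1) / p = (a * (N - 1) / p + 1) + c * N := by
  refine ⟨a * (N ^ (k - 1) - 1) / p, ?_⟩
  have hd1 : p ∣ a * (N ^ k - 1) := (dvd_pow_sub_one (by omega) hdvd k).mul_left a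
  have hd2 : p ∣ a * (N - 1) := hdvd.mul_left a
  have hd3 : p ∣ a * (N ^ (k - 1) - 1) := (dvd_pow_sub_one (by omega) hdvd (k - 1)).mul_left a
  have h1 := Nat.mul_div_cancel' hd1
  have h2 := Nat.mul_div_cancel' hd2
  have h3 := Nat.mul_div_cancel' hd3
  have hkey : p * (a * (N ^ k - 1) / p)
      = p * ((a * (N - 1) / p) + (a * (N ^ (k - 1) - 1) / p) * N) := by
    rw [Nat.mul_add, h1, h2, ← Nat.mul_assoc, h3]
    have h1N : 1 ≤ N ^ k := Nat.one_le_pow _ _ (by omega)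
    have h2N : 1 ≤ N ^ (k - 1) := Nat.one_le_pow _ _ (by omega)
    zify [h1N, h2N, (by omega : 1 ≤ N)]
    have hxx : (N : ℤ) ^ k = (N : ℤ) ^ (k - 1) * N := by
      rw [← pow_succ]
      congr 1
      omega
    linear_combination (a : ℤ) * hxx
  have := Nat.eq_of_mul_eq_mul_left hp0 hkey
  omega




-- per-element exponent computation
private lemma exp_eq (N p a : ℕ) [hNp : Fact N.Prime] (hpN : p < N) (ha0 : 0 < a)
    (hap : a < p) (x : ℤ) (hx1 : x ≡ 1 [ZMOD p]) (hxu : ((x : ZMod N)) ≠ 0)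
    (haN : ((a : ℕ) : ZMod N) ≠ 0) :
    ⌊((a : ℚ) * (x : ℚ)) / ((N : ℚ) * p)⌋
      + ⌊((a : ℚ) * ((N : ℚ) - (x : ℚ))) / ((N : ℚ) * p)⌋ + 1
    = if (a : ℤ) * x % ((N : ℤ) * p) < (a : ℤ) * N then 1 else 0 := by
  have hN0 : 0 < N := hNp.out.pos
  have hp0 : 0 < p := by omega
  have e1 : ((a : ℚ) * (x : ℚ)) / ((N : ℚ) * p) = (((a : ℤ) * x : ℤ) : ℚ) / ((N * p : ℕ) : ℚ) := by
    push_cast; ring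
  have e2 : ((a : ℚ) * ((N : ℚ) - (x : ℚ))) / ((N : ℚ) * p)
      = (((a : ℤ) * ((N : ℤ) - x) : ℤ) : ℚ) / ((N * p : ℕ) : ℚ) := by
    push_cast; ring
  rw [e1, e2, Rat.floor_intCast_div_natCast, Rat.floor_intCast_div_natCast]
  set D : ℤ := ((N * p : ℕ) : ℤ) with hD
  have hDval : D = (N : ℤ) * p := by push_cast [hD]; ring
  have hD0 : 0 < D := by rw [hDval]; positivity
  set A : ℤ := (a : ℤ) * x % D with hA
  set B : ℤ := (a : ℤ) * ((N : ℤ) - x) % D with hB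
  set q1 : ℤ := (a : ℤ) * x / D with hq1
  set q2 : ℤ := (a : ℤ) * ((N : ℤ) - x) / D with hq2
  have h1 : D * q1 + A = (a : ℤ) * x := Int.mul_ediv_add_emod _ _
  have h2 : D * q2 + B = (a : ℤ) * ((N : ℤ) - x) := Int.mul_ediv_add_emod _ _
  have hA0 : 0 ≤ A := Int.emod_nonneg _ (ne_of_gt hD0)
  have hAD : A < D := Int.emod_lt_of_pos _ hD0
  have hB0 : 0 ≤ B := Int.emod_nonneg _ (ne_of_gt hD0)
  have hBD : B < D := Int.emod_lt_of_pos _ hD0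
  -- N does not divide a * x
  have hnd : ¬ ((N : ℤ) ∣ (a : ℤ) * x) := by
    intro hdvd
    have : (((a : ℤ) * x : ℤ) : ZMod N) = 0 := (ZMod.intCast_zmod_eq_zero_iff_dvd _ N).mpr hdvd
    push_cast at this
    exact (mul_ne_zero haN hxu) this
  have hAne0 : A ≠ 0 := by
    intro h
    apply hnd
    refine ⟨(p : ℤ) * q1, ?_⟩
    have := h1
    rw [h, add_zero, hDval] at this
    linarith [this]
  have hBne0 : B ≠ 0 := by
    intro h
    apply hnd
    refine ⟨(a : ℤ) - (p : ℤ) * q2, ?_⟩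
    have := h2
    rw [h, add_zero, hDval] at this
    nlinarith [this]
  have hAne : A ≠ (a : ℤ) * N := by
    intro h
    apply hnd
    refine ⟨(p : ℤ) * q1 + a, ?_⟩
    have := h1
    rw [h, hDval] at this
    nlinarith [this]
  have haND : (a : ℤ) * N < D := by
    rw [hDval]
    have : (a : ℤ) < p := by exact_mod_cast hap
    have hN0' : (0 : ℤ) < N := by exact_mod_cast hN0
    nlinarith
  have haN0 : 0 < (a : ℤ) * N := by positivity
  have hsum : D * (q1 + q2) = (a : ℤ) * N - A - B := by linear_combination h1 + h2
  have hub : q1 + q2 < 1 := by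
    have : D * (q1 + q2) < D * 1 := by rw [hsum]; linarith
    exact lt_of_mul_lt_mul_left this hD0.le
  have hlb : -2 < q1 + q2 := by
    have : D * (-2) < D * (q1 + q2) := by rw [hsum]; linarith
    exact lt_of_mul_lt_mul_left this hD0.le
  have hcases : q1 + q2 = 0 ∨ q1 + q2 = -1 := by omega
  rw [← hDval]
  rcases hcases with h | h
  · rw [h] at hsum
    have hAlt : A < (a : ℤ) * N := by
      simp only [mul_zero] at hsum
      omega
    rw [if_pos hAlt]
    omega
  · rw [h] at hsum
    have hAgt : ¬ (A < (a : ℤ) * N) := by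
      push_neg
      simp only [mul_neg_one] at hsum
      linarith
    rw [if_neg hAgt]
    omega



private lemma step_C (N p a M : ℕ) [hNp : Fact N.Prime] (hpN : p < N) (ha0 : 0 < a)
    (hap : a < p) (hMN : M < N)
    (X : Finset ℤ)
    (hXrep : ∀ u : (ZMod N)ˣ, ∃! x, x ∈ X ∧ ((x : ZMod N) = (u : ZMod N)))
    (hXunit : ∀ x ∈ X, ((x : ZMod N)) ≠ 0)
    (hXp : ∀ x ∈ X, x ≡ 1 [ZMOD p])
    (s : ZMod N) (hps : (p : ZMod N) * s = (a : ZMod N))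
    (hsM : s = -(M : ZMod N))
    (hpM : (p : ℤ) * M = (a : ℤ) * N - a) :
    ∏ x ∈ X.filter (fun x => (a : ℤ) * x % ((N : ℤ) * p) < (a : ℤ) * N), ((x : ZMod N))
      = ∏ j ∈ Finset.range M,
          ((a : ZMod N)⁻¹ * ((a : ZMod N) + (p : ZMod N) * (j : ZMod N))) := by
  have hN2 : 2 ≤ N := hNp.out.two_le
  have hp0 : (0 : ℤ) < p := by exact_mod_cast by omega
  have hN0 : (0 : ℤ) < N := by exact_mod_cast by omega
  have ha0' : (0 : ℤ) < a := by exact_mod_cast ha0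
  have hap' : (a : ℤ) < p := by exact_mod_cast hap
  have haN : ((a : ℕ) : ZMod N) ≠ 0 := by
    rw [Ne, ZMod.natCast_eq_zero_iff]
    intro h
    have := Nat.le_of_dvd ha0 h
    omega
  have hpz : ((p : ℕ) : ZMod N) ≠ 0 := by
    rw [Ne, ZMod.natCast_eq_zero_iff]
    intro h
    have := Nat.le_of_dvd (by omega) h
    omega
  have key : ∀ x ∈ X, ∃ j : ℤ, 0 ≤ j ∧ (a : ℤ) * x % ((N : ℤ) * p) = a + p * j ∧
      (a : ZMod N) * (x : ZMod N) = (a : ZMod N) + (p : ZMod N) * ((j : ℤ) : ZMod N) ∧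
      j = ((a : ℤ) * x % ((N : ℤ) * p) - a) / p := by
    intro x hx
    have hD0 : (0 : ℤ) < (N : ℤ) * p := by positivity
    have h1 : (N : ℤ) * p * ((a : ℤ) * x / ((N : ℤ) * p)) + (a : ℤ) * x % ((N : ℤ) * p)
        = (a : ℤ) * x := Int.mul_ediv_add_emod _ _
    have hA0 : 0 ≤ (a : ℤ) * x % ((N : ℤ) * p) := Int.emod_nonneg _ (ne_of_gt hD0)
    have hx1 : (p : ℤ) ∣ x - 1 := (hXp x hx).symm.dvd
    have hdvd : (p : ℤ) ∣ (a : ℤ) * x % ((N : ℤ) * p) - a := by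
      have hrepr : (a : ℤ) * x % ((N : ℤ) * p) - a
          = a * (x - 1) - p * ((N : ℤ) * ((a : ℤ) * x / ((N : ℤ) * p))) := by
        linear_combination h1
      rw [hrepr]
      exact dvd_sub (hx1.mul_left _) (dvd_mul_right _ _)
    have hpj : (p : ℤ) * (((a : ℤ) * x % ((N : ℤ) * p) - a) / p)
        = (a : ℤ) * x % ((N : ℤ) * p) - a := Int.mul_ediv_cancel' hdvd
    refine ⟨((a : ℤ) * x % ((N : ℤ) * p) - a) / p, ?_, by omega, ?_, rfl⟩
    · by_contra hneg
      push_neg at hneg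
      have h2 : ((a : ℤ) * x % ((N : ℤ) * p) - a) / p ≤ -1 := by omega
      have h3 := mul_le_mul_of_nonneg_left h2 hp0.le
      rw [hpj] at h3
      omega
    · have hAx : (a : ℤ) * x % ((N : ℤ) * p)
          = a + p * (((a : ℤ) * x % ((N : ℤ) * p) - a) / p) := by omega
      have hcast : (((a : ℤ) * x % ((N : ℤ) * p) : ℤ) : ZMod N)
          = (a : ZMod N) * (x : ZMod N) := by
        have h4 := congrArg (fun t : ℤ => (t : ZMod N)) h1
        push_cast at h4
        rw [ZMod.natCast_self] at h4
        simpa using h4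
      have h5 := congrArg (fun t : ℤ => (t : ZMod N)) hAx
      push_cast at h5
      push_cast at hcast
      rw [hcast] at h5
      exact h5
  refine Finset.prod_bij
    (fun x _ => (((a : ℤ) * x % ((N : ℤ) * p) - a) / p).toNat) ?_ ?_ ?_ ?_
  · -- maps to range M
    intro x hx
    obtain ⟨hxX, hcond⟩ := Finset.mem_filter.mp hx
    obtain ⟨j, hj0, hAeq, _, hjdef⟩ := key x hxX
    have hpj : (p : ℤ) * j < p * M := by rw [hpM]; omega
    have hjM : j < M := lt_of_mul_lt_mul_left hpj hp0.le
    simp only [Finset.mem_range]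
    omega
  · -- injective
    intro x₁ hx₁ x₂ hx₂ heq
    obtain ⟨hx₁X, -⟩ := Finset.mem_filter.mp hx₁
    obtain ⟨hx₂X, -⟩ := Finset.mem_filter.mp hx₂
    obtain ⟨j₁, hj₁0, -, hz₁, hjdef₁⟩ := key x₁ hx₁X
    obtain ⟨j₂, hj₂0, -, hz₂, hjdef₂⟩ := key x₂ hx₂X
    have hj : j₁ = j₂ := by omega
    have hxx : ((x₁ : ℤ) : ZMod N) = ((x₂ : ℤ) : ZMod N) := by
      apply mul_left_cancel₀ haN
      rw [hz₁, hz₂, hj]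
    have hu := isUnit_iff_ne_zero.mpr (hXunit x₁ hx₁X)
    obtain ⟨y, -, hy⟩ := hXrep hu.unit
    have e₁ := hy x₁ ⟨hx₁X, hu.unit_spec.symm⟩
    have e₂ := hy x₂ ⟨hx₂X, by rw [← hxx]; exact hu.unit_spec.symm⟩
    rw [e₁, e₂]
  · -- surjective
    intro j hj
    rw [Finset.mem_range] at hj
    have hjN : (j : ℤ) < N := by exact_mod_cast lt_trans hj hMN
    have hne : (a : ZMod N) + (p : ZMod N) * (j : ZMod N) ≠ 0 := by
      intro h0
      have hsj : (p : ZMod N) * (s + (j : ZMod N)) = 0 := by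
        rw [mul_add, hps]; exact h0
      have hsj0 : s + (j : ZMod N) = 0 := by
        rcases mul_eq_zero.mp hsj with h | h
        · exact absurd h hpz
        · exact h
      have hjM : (j : ZMod N) = (M : ZMod N) := by
        have h6 : (j : ZMod N) = -s := by linear_combination hsj0
        rw [h6, hsM, neg_neg]
      have hv := congrArg ZMod.val hjM
      rw [ZMod.val_natCast_of_lt (by omega : j < N), ZMod.val_natCast_of_lt hMN] at hv
      omega
    have hw : (a : ZMod N)⁻¹ * ((a : ZMod N) + (p : ZMod N) * (j : ZMod N)) ≠ 0 :=
      mul_ne_zero (inv_ne_zero haN) hne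
    have hu := isUnit_iff_ne_zero.mpr hw
    obtain ⟨x, ⟨hxX, hxw⟩, -⟩ := hXrep hu.unit
    rw [hu.unit_spec] at hxw
    obtain ⟨j', hj'0, hAeq, hz, hjdef⟩ := key x hxX
    have hax : (a : ZMod N) * ((x : ℤ) : ZMod N)
        = (a : ZMod N) + (p : ZMod N) * (j : ZMod N) := by
      rw [hxw, mul_inv_cancel_left₀ haN]
    have hjj : ((j' : ℤ) : ZMod N) = ((j : ℕ) : ZMod N) := by
      apply mul_left_cancel₀ hpz
      have h7 := hz.symm.trans hax
      linear_combination h7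
    have hNdvd : (N : ℤ) ∣ j' - (j : ℤ) := by
      rw [← ZMod.intCast_zmod_eq_zero_iff_dvd]
      push_cast
      rw [hjj]
      push_cast
      ring
    obtain ⟨t, ht⟩ := hNdvd
    have hAD : (a : ℤ) * x % ((N : ℤ) * p) < (N : ℤ) * p :=
      Int.emod_lt_of_pos _ (by positivity)
    have hj'N : j' < N := by
      have h8 : (a : ℤ) + p * j' < N * p := by rw [← hAeq]; exact hAD
      have hpj' : (p : ℤ) * j' < p * N := by linarith
      exact lt_of_mul_lt_mul_left hpj' hp0.le
    have ht0 : t = 0 := by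
      rcases lt_trichotomy t 0 with h | h | h
      · exfalso
        have h9 : (N : ℤ) * t ≤ (N : ℤ) * (-1) :=
          mul_le_mul_of_nonneg_left (by omega : t ≤ -1) hN0.le
        have h10 : j' - (j : ℤ) ≤ -N := by rw [ht]; linarith
        linarith
      · exact h
      · exfalso
        have h9 : (N : ℤ) * 1 ≤ (N : ℤ) * t :=
          mul_le_mul_of_nonneg_left (by omega : (1 : ℤ) ≤ t) hN0.le
        have h10 : (N : ℤ) ≤ j' - (j : ℤ) := by rw [ht]; linarith
        linarith
    rw [ht0, mul_zero] at ht
    have hj'j : j' = (j : ℤ) := by omega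
    refine ⟨x, ?_, ?_⟩
    · refine Finset.mem_filter.mpr ⟨hxX, ?_⟩
      have hjM' : (j' : ℤ) < M := by rw [hj'j]; exact_mod_cast hj
      have hpjM : (p : ℤ) * j' < p * M := mul_lt_mul_of_pos_left hjM' hp0
      have h11 : (a : ℤ) + p * j' < a * N := by linarith [hpM]
      rw [hAeq]
      exact h11
    · show (((a : ℤ) * x % ((N : ℤ) * p) - a) / p).toNat = j
      rw [← hjdef]
      omega
  · -- values
    intro x hx
    obtain ⟨hxX, -⟩ := Finset.mem_filter.mp hx
    obtain ⟨j', hj'0, -, hz, hjdef⟩ := key x hxX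
    show ((x : ℤ) : ZMod N)
        = (a : ZMod N)⁻¹ * ((a : ZMod N)
            + (p : ZMod N) * (((((a : ℤ) * x % ((N : ℤ) * p) - a) / p).toNat : ℕ) : ZMod N))
    have hcast : ((((((a : ℤ) * x % ((N : ℤ) * p) - a) / p).toNat : ℕ)) : ZMod N)
        = ((j' : ℤ) : ZMod N) := by
      rw [← hjdef]
      have h12 : ((j'.toNat : ℕ) : ℤ) = j' := Int.toNat_of_nonneg hj'0
      exact_mod_cast congrArg (fun t : ℤ => (t : ZMod N)) h12
    rw [hcast, ← hz, inv_mul_cancel_left₀ haN]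

set_option maxHeartbeats 1000000 in
/-- Let `N, p` be primes with `p ∣ N-1`, `1 ≤ a ≤ p-1`, and `X` a set of integer
representatives of `(Z/NZ)ˣ` all congruent to `1 (mod p)`. Then, for Morita's `N`-adic
Gamma function `Γ_N`,
`Γ_N(1 - a/p) ≡ ±(a/p)^{a(N-1)/p} ∏_{x∈X} x^{⌊ax/(Np)⌋+⌊a(N-x)/(Np)⌋+1} (mod N)`,
where `q = a/p ∈ ℤ_N`. -/
theorem moritaGamma_value_formula (N p : ℕ) [hNp : Fact N.Prime] (hp : p.Prime)
    (hdvd : p ∣ N - 1) (a : ℕ) (ha1 : 1 ≤ a) (hap : a ≤ p - 1)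
    (Γ : ℤ_[N] → ℤ_[N]) (hΓcont : Continuous Γ)
    (hΓval : ∀ n : ℕ, 1 < n →
      Γ (n : ℤ_[N]) = (-1) ^ n *
        ∏ i ∈ (Finset.range n).filter (fun i => Nat.gcd i N = 1), (i : ℤ_[N]))
    (hΓunit : ∀ z : ℤ_[N], IsUnit (Γ z))
    (X : Finset ℤ)
    (hXrep : ∀ u : (ZMod N)ˣ, ∃! x, x ∈ X ∧ ((x : ZMod N) = (u : ZMod N)))
    (hXunit : ∀ x ∈ X, ((x : ZMod N)) ≠ 0)
    (hXp : ∀ x ∈ X, x ≡ 1 [ZMOD p])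
    (q : ℤ_[N]) (hq : (p : ℤ_[N]) * q = (a : ℤ_[N])) :
    ∃ ε : ZMod N, (ε = 1 ∨ ε = -1) ∧
      PadicInt.toZMod (Γ (1 - q))
        = ε * (PadicInt.toZMod q) ^ (a * (N - 1) / p) *
            ∏ x ∈ X, ((x : ZMod N)) ^
              (⌊((a : ℚ) * (x : ℚ)) / ((N : ℚ) * p)⌋
                + ⌊((a : ℚ) * ((N : ℚ) - (x : ℚ))) / ((N : ℚ) * p)⌋ + 1) := by
  have hp2 : 2 ≤ p := hp.two_le
  have hN2 : 2 ≤ N := hNp.out.two_le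
  have hpN1 : p ≤ N - 1 := Nat.le_of_dvd (by omega) hdvd
  have hpN : p < N := by omega
  have ha : a < p := by omega
  set M : ℕ := a * (N - 1) / p with hM
  have hpM : p * M = a * (N - 1) := Nat.mul_div_cancel' (hdvd.mul_left a)
  have hMN1 : M < N - 1 := by
    have h1 : a * (N - 1) < p * (N - 1) :=
      (Nat.mul_lt_mul_right (by omega : 0 < N - 1)).mpr ha
    have h2 : p * M < p * (N - 1) := by omega
    exact Nat.lt_of_mul_lt_mul_left h2
  have hMN : M < N := by omega
  have hpMZ : (p : ℤ) * M = (a : ℤ) * N - a := by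
    have := congrArg (fun t : ℕ => (t : ℤ)) hpM
    push_cast [Nat.cast_sub (by omega : 1 ≤ N)] at this
    linarith [this]
  -- the residue of q
  set s : ZMod N := PadicInt.toZMod q with hs
  have hps : (p : ZMod N) * s = (a : ZMod N) := by
    have := congrArg PadicInt.toZMod hq
    rwa [map_mul, map_natCast, map_natCast] at this
  have haN : ((a : ℕ) : ZMod N) ≠ 0 := by
    rw [Ne, ZMod.natCast_eq_zero_iff]
    intro h
    have := Nat.le_of_dvd (by omega) h
    omega
  have hpz : ((p : ℕ) : ZMod N) ≠ 0 := by
    rw [Ne, ZMod.natCast_eq_zero_iff]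
    intro h
    have := Nat.le_of_dvd (by omega) h
    omega
  have hsM : s = -(M : ZMod N) := by
    have h1 : (p : ZMod N) * (M : ZMod N) = -(a : ZMod N) := by
      have := congrArg (fun t : ℕ => (t : ZMod N)) hpM
      push_cast [Nat.cast_sub (by omega : 1 ≤ N)] at this
      rw [ZMod.natCast_self] at this
      simpa using this
    have h2 : (p : ZMod N) * (s + (M : ZMod N)) = 0 := by
      rw [mul_add, hps, h1]
      ring
    have h3 : s + (M : ZMod N) = 0 := by
      rcases mul_eq_zero.mp h2 with h | h
      · exact absurd h hpz
      · exact h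
    linear_combination h3
  -- Step A : approximate 1 - q by a natural number m
  obtain ⟨k, hk1, hm2, hΓeq⟩ := step_A N p hp hdvd a ha1 Γ hΓcont q hq
  set m : ℕ := 1 + a * (N ^ k - 1) / p with hmdef
  obtain ⟨c, hc⟩ := decomp N p a k hN2 hdvd (by omega) hk1
  -- Step B : compute Γ(m) mod N
  have hB : PadicInt.toZMod (Γ (m : ℤ_[N]))
      = (-1) ^ (m + c) * ((Nat.factorial M : ℕ) : ZMod N) := by
    have h1 := congrArg PadicInt.toZMod (hΓval m (by omega))
    rw [map_mul, map_pow, map_neg, map_one, map_prod] at h1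
    simp only [map_natCast] at h1
    have h2 : ∏ i ∈ (Finset.range m).filter (fun i => Nat.gcd i N = 1), ((i : ℕ) : ZMod N)
        = (-1) ^ c * ((Nat.factorial M : ℕ) : ZMod N) := by
      have hm' : m = (M + 1) + c * N := by rw [hmdef, hM]; omega
      rw [hm']
      exact prod_coprime_range N M c (by omega)
    rw [h2] at h1
    rw [h1, pow_add]
    ring
  -- Step C : express the product over X
  have hCexp : ∀ x ∈ X,
      ((x : ZMod N)) ^
        (⌊((a : ℚ) * (x : ℚ)) / ((N : ℚ) * p)⌋
          + ⌊((a : ℚ) * ((N : ℚ) - (x : ℚ))) / ((N : ℚ) * p)⌋ + 1)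
      = if (a : ℤ) * x % ((N : ℤ) * p) < (a : ℤ) * N then ((x : ZMod N)) else 1 := by
    intro x hx
    rw [exp_eq N p a hpN (by omega) ha x (hXp x hx) (hXunit x hx) haN]
    split_ifs with h
    · exact zpow_one _
    · exact zpow_zero _
  have hC : ∏ x ∈ X, ((x : ZMod N)) ^
        (⌊((a : ℚ) * (x : ℚ)) / ((N : ℚ) * p)⌋
          + ⌊((a : ℚ) * ((N : ℚ) - (x : ℚ))) / ((N : ℚ) * p)⌋ + 1)
      = ∏ j ∈ Finset.range M,
          ((a : ZMod N)⁻¹ * ((a : ZMod N) + (p : ZMod N) * (j : ZMod N))) := by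
    rw [Finset.prod_congr rfl hCexp, ← Finset.prod_filter]
    exact step_C N p a M hpN (by omega) ha hMN X hXrep hXunit hXp s hps hsM hpMZ
  -- Step D : evaluate the product over range M
  have hD : s ^ M * ∏ j ∈ Finset.range M,
        ((a : ZMod N)⁻¹ * ((a : ZMod N) + (p : ZMod N) * (j : ZMod N)))
      = (-1) ^ M * ((Nat.factorial M : ℕ) : ZMod N) := by
    have hterm : ∀ j ∈ Finset.range M,
        (a : ZMod N)⁻¹ * ((a : ZMod N) + (p : ZMod N) * (j : ZMod N))
        = ((a : ZMod N)⁻¹ * (p : ZMod N)) * (-1)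
            * (((M - j : ℕ) : ZMod N)) := by
      intro j hj
      rw [Finset.mem_range] at hj
      have h1 : (a : ZMod N) + (p : ZMod N) * (j : ZMod N)
          = (p : ZMod N) * ((j : ZMod N) - (M : ZMod N)) := by
        rw [mul_sub]
        have : (p : ZMod N) * (M : ZMod N) = -(a : ZMod N) := by
          have h2 : (p : ZMod N) * (s + (M : ZMod N)) = 0 := by
            rw [hsM]; ring
          rw [mul_add, hps] at h2
          linear_combination h2
        rw [this]
        ring
      have h3 : ((M - j : ℕ) : ZMod N) = (M : ZMod N) - (j : ZMod N) := by
        push_cast [Nat.cast_sub hj.le]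
        ring
      rw [h1, h3]
      ring
    rw [Finset.prod_congr rfl hterm]
    rw [Finset.prod_mul_distrib, Finset.prod_const, Finset.card_range]
    have h4 : ∏ j ∈ Finset.range M, ((M - j : ℕ) : ZMod N)
        = ((Nat.factorial M : ℕ) : ZMod N) := by
      rw [← Nat.cast_prod]
      congr 1
      have h5 : ∀ j ∈ Finset.range M, M - j = (fun t => t + 1) (M - 1 - j) := by
        intro j hj
        rw [Finset.mem_range] at hj
        show M - j = M - 1 - j + 1
        omega
      rw [Finset.prod_congr rfl h5, Finset.prod_range_reflect (fun t => t + 1) M]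
      exact Finset.prod_range_add_one_eq_factorial M
    rw [h4, mul_pow]
    have h6 : s ^ M * (((a : ZMod N)⁻¹ * (p : ZMod N)) ^ M * (-1 : ZMod N) ^ M)
        = ((a : ZMod N)⁻¹ * ((p : ZMod N) * s)) ^ M * (-1 : ZMod N) ^ M := by
      ring
    rw [← mul_assoc, h6, hps, inv_mul_cancel₀ haN, one_pow, one_mul]
  -- Assemble
  refine ⟨(-1 : ZMod N) ^ (m + c + M), ?_, ?_⟩
  · rcases Nat.even_or_odd (m + c + M) with h | h
    · exact Or.inl (h.neg_one_pow)
    · exact Or.inr (h.neg_one_pow)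
  · have hsq : ((-1 : ZMod N)) ^ M * (-1 : ZMod N) ^ M = 1 := by
      rw [← pow_add, ← two_mul, pow_mul]
      norm_num
    have final : ((-1 : ZMod N)) ^ (m + c + M)
          * ((-1 : ZMod N) ^ M * ((Nat.factorial M : ℕ) : ZMod N))
        = (-1 : ZMod N) ^ (m + c) * ((Nat.factorial M : ℕ) : ZMod N) := by
      rw [pow_add]
      linear_combination ((-1 : ZMod N)) ^ (m + c) * ((Nat.factorial M : ℕ) : ZMod N) * hsq
    rw [hΓeq, hB, hC, mul_assoc, hD]
    exact final.symm
end

section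
/- Let N, p be primes ≥ 5 with p | N-1, ν = v_p(N-1), and a an integer with 1 ≤ a ≤ p-1. Set X = {N - kp : k = 1, ..., N-1}. Then ∑_{x∈X} ⌊ax/(Np)⌋ ≡ a·(N-1)/p (mod p^ν). -/
open Finset

lemma reindex_aux (N a : ℕ) (hN : N.Prime) (ha : ¬ N ∣ a)
    {M : Type*} [AddCommMonoid M] (f : ℕ → M) :
    ∑ k ∈ Finset.Icc 1 (N-1), f (a * k % N) = ∑ j ∈ Finset.Icc 1 (N-1), f j := by
  haveI : Fact N.Prime := ⟨hN⟩
  have hN0 : 0 < N := hN.pos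
  have haz : (a : ZMod N) ≠ 0 := by
    rw [Ne, ZMod.natCast_eq_zero_iff]; exact ha
  have hmem : ∀ n : ℕ, ¬ N ∣ n → n % N ∈ Finset.Icc 1 (N-1) := by
    intro n hn
    have h1 : n % N < N := Nat.mod_lt _ hN0
    have h2 : n % N ≠ 0 := fun h => hn (Nat.dvd_of_mod_eq_zero h)
    simp [Finset.mem_Icc]; omega
  have hval : ∀ x : ZMod N, x ≠ 0 → x.val ∈ Finset.Icc 1 (N-1) := by
    intro x hx
    have h1 : x.val < N := ZMod.val_lt x
    have h2 : x.val ≠ 0 := fun h => hx (by rwa [← ZMod.val_eq_zero])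
    simp [Finset.mem_Icc]; omega
  refine Finset.sum_nbij' (fun k => a * k % N)
    (fun m => ((a : ZMod N)⁻¹ * (m : ZMod N)).val) ?_ ?_ ?_ ?_ ?_
  · intro k hk
    simp only [Finset.mem_Icc] at hk
    refine hmem _ ?_
    intro hdvd
    rcases (Nat.Prime.dvd_mul hN).mp hdvd with h | h
    · exact ha h
    · have := Nat.le_of_dvd (by omega) h; omega
  · intro m hm
    simp only [Finset.mem_Icc] at hm
    refine hval _ ?_
    have hmz : (m : ZMod N) ≠ 0 := by
      rw [Ne, ZMod.natCast_eq_zero_iff]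
      intro h; have := Nat.le_of_dvd (by omega) h; omega
    exact mul_ne_zero (inv_ne_zero haz) hmz
  · intro k hk
    simp only [Finset.mem_Icc] at hk
    show ((a : ZMod N)⁻¹ * ((a * k % N : ℕ) : ZMod N)).val = k
    have : ((a * k % N : ℕ) : ZMod N) = (a : ZMod N) * k := by
      rw [ZMod.natCast_mod]; push_cast; ring
    rw [this, inv_mul_cancel_left₀ haz, ZMod.val_natCast, Nat.mod_eq_of_lt (by omega)]
  · intro m hm
    simp only [Finset.mem_Icc] at hm
    show a * ((a : ZMod N)⁻¹ * (m : ZMod N)).val % N = m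
    set x := (a : ZMod N)⁻¹ * (m : ZMod N) with hx
    have : ((a * x.val : ℕ) : ZMod N) = (m : ZMod N) := by
      push_cast
      rw [ZMod.natCast_val, ZMod.cast_id, hx, mul_inv_cancel_left₀ haz]
    rw [← ZMod.val_natCast (a := a * x.val), this, ZMod.val_natCast, Nat.mod_eq_of_lt (by omega)]
  · intro k _; rfl

/-- Let `N, p` be primes `≥ 5` with `p ∣ N-1`, `ν = v_p(N-1)`, and `1 ≤ a ≤ p-1`.
For `X = {N - kp : k = 1, ..., N-1}` one has
`∑_{x∈X} ⌊ax/(Np)⌋ ≡ a·(N-1)/p (mod p^ν)`. -/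
theorem sum_floor_over_X (N p ν a : ℕ) (hN : N.Prime) (hp : p.Prime)
    (hN5 : 5 ≤ N) (hp5 : 5 ≤ p) (hdvd : p ∣ N - 1)
    (hν : ν = (N - 1).factorization p) (ha1 : 1 ≤ a) (hap : a ≤ p - 1) :
    (∑ k ∈ Finset.Icc 1 (N - 1),
        ⌊((a : ℚ) * ((N : ℚ) - (k : ℚ) * p)) / ((N : ℚ) * p)⌋)
      ≡ ((a * (N - 1) / p : ℕ) : ℤ) [ZMOD ((p : ℤ) ^ ν)] := by
  have hpN : p ≤ N - 1 := Nat.le_of_dvd (by omega) hdvd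
  set d := a * (N - 1) / p with hd_def
  have hd : p * d = a * (N - 1) := Nat.mul_div_cancel' (hdvd.mul_left a)
  clear_value d
  clear hd_def
  have haN : a * N = p * d + a := by
    have h1 : a * N = a * (N - 1) + a := by
      have h2 : N - 1 + 1 = N := by omega
      rw [← h2, Nat.mul_succ, h2]
    rw [h1, hd]
  have hap' : a < p := by omega
  have haNN : a * N < N * p := by
    calc a * N < p * N := (Nat.mul_lt_mul_right (show 0 < N by omega)).mpr hap'
    _ = N * p := Nat.mul_comm p N
  have hdN : d ≤ N - 1 := by
    have h1 : p * d ≤ p * (N - 1) := by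
      rw [hd]; exact Nat.mul_le_mul_right _ (by omega)
    exact Nat.le_of_mul_le_mul_left h1 (by omega)
  have hNa : ¬ N ∣ a := by
    intro h
    have := Nat.le_of_dvd (by omega) h
    omega
  -- term-wise evaluation
  have key : ∀ k ∈ Finset.Icc 1 (N-1),
      ⌊((a : ℚ) * ((N : ℚ) - (k : ℚ) * p)) / ((N : ℚ) * p)⌋
        = (if a * k % N ≤ d then 0 else -1) - ((a * k / N : ℕ) : ℤ) := by
    intro k hk
    simp only [Finset.mem_Icc] at hk
    set j := a * k % N with hjdef
    set q := a * k / N with hq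
    have hjq : N * q + j = a * k := Nat.div_add_mod (a*k) N
    have hjN : j < N := Nat.mod_lt _ (by omega)
    have hj1 : 1 ≤ j := by
      rcases Nat.eq_zero_or_pos j with h | h
      · exfalso
        have hdvd2 : N ∣ a * k := Nat.dvd_of_mod_eq_zero h
        rcases (Nat.Prime.dvd_mul hN).mp hdvd2 with h' | h'
        · exact hNa h'
        · have := Nat.le_of_dvd (by omega) h'; omega
      · exact h
    have hc : (a:ℚ) * k = (N:ℚ) * q + j := by exact_mod_cast hjq.symm
    have hNp0 : (0:ℚ) < (N:ℚ) * p := by positivity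
    have e1 : ((a : ℚ) * ((N : ℚ) - (k : ℚ) * p)) / ((N : ℚ) * p)
        = ((a:ℚ)*N - (j:ℚ)*p) / ((N:ℚ)*p) - q := by
      rw [eq_sub_iff_add_eq, div_add' _ _ _ (ne_of_gt hNp0)]
      congr 1
      linear_combination (-(p:ℚ)) * hc
    rw [e1, Int.floor_sub_natCast]
    congr 1
    by_cases hle : j ≤ d
    · rw [if_pos hle]
      have hlt : j * p < a * N := by nlinarith [haN]
      rw [Int.floor_eq_zero_iff]
      constructor
      · apply div_nonneg _ (le_of_lt hNp0)
        have : (j:ℚ) * p ≤ (a:ℚ) * N := by exact_mod_cast le_of_lt hlt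
        linarith
      · rw [div_lt_one hNp0]
        have : (a:ℚ) * N < (N:ℚ) * p := by exact_mod_cast haNN
        have hjp : (0:ℚ) ≤ (j:ℚ) * p := by positivity
        linarith
    · rw [if_neg hle]
      push_neg at hle
      have hgt : a * N < j * p := by nlinarith [haN]
      have hjNp : j * p < N * p := (Nat.mul_lt_mul_right (show 0 < p by omega)).mpr hjN
      rw [Int.floor_eq_iff]
      constructor
      · rw [Int.cast_neg, Int.cast_one, le_div_iff₀ hNp0]
        have h1 : (j:ℚ) * p < (N:ℚ) * p := by exact_mod_cast hjNp
        have h2 : (0:ℚ) ≤ (a:ℚ) * N := by positivity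
        linarith
      · have h3 : (a:ℚ) * N < (j:ℚ) * p := by exact_mod_cast hgt
        have h4 : ((a:ℚ)*N - (j:ℚ)*p) / ((N:ℚ)*p) < 0 := div_neg_of_neg_of_pos (by linarith) hNp0
        push_cast
        linarith
  rw [Finset.sum_congr rfl key, Finset.sum_sub_distrib]
  -- evaluate the indicator sum
  have hsum1 : (∑ k ∈ Finset.Icc 1 (N-1), (if a * k % N ≤ d then (0:ℤ) else -1))
      = (d:ℤ) - ((N:ℤ) - 1) := by
    rw [reindex_aux N a hN hNa (fun j => if j ≤ d then (0:ℤ) else -1)]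
    rw [Finset.sum_ite]
    simp only [Finset.sum_const_zero, Finset.sum_const, zero_add, smul_eq_mul,
      nsmul_eq_mul, mul_neg_one]
    have hfil : Finset.filter (fun j => ¬ j ≤ d) (Finset.Icc 1 (N-1))
        = Finset.Icc (d+1) (N-1) := by
      ext x; simp only [Finset.mem_filter, Finset.mem_Icc]; omega
    rw [hfil, Nat.card_Icc]
    omega
  -- Gauss sum over Icc 1 (N-1)
  have hNodd : ¬ (2 ∣ N) := by
    intro h
    rcases (Nat.Prime.eq_one_or_self_of_dvd hN 2 h) with h' | h' <;> omega
  set m := (N-1)/2 with hmdef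
  have hm2 : 2 * m = N - 1 := by omega
  have hsumj : (∑ j ∈ Finset.Icc 1 (N-1), (j:ℤ)) = (N:ℤ) * m := by
    have h2 : (∑ i ∈ Finset.range N, i) * 2 = N * (N - 1) := Finset.sum_range_id_mul_two N
    have h3 : ∑ i ∈ Finset.range N, i = ∑ i ∈ Finset.Icc 1 (N-1), i := by
      rw [Finset.range_eq_Ico, Finset.sum_eq_sum_Ico_succ_bot (by omega : 0 < N)]
      have : Finset.Ico (0+1) N = Finset.Icc 1 (N-1) := by
        ext x; simp only [Finset.mem_Ico, Finset.mem_Icc]; omega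
      rw [this, zero_add]
    have h4 : (∑ i ∈ Finset.Icc 1 (N-1), i) * 2 = (N * m) * 2 := by
      rw [← h3, h2]
      calc N * (N - 1) = N * (2 * m) := by rw [hm2]
      _ = N * m * 2 := by ring
    have h5 : ∑ i ∈ Finset.Icc 1 (N-1), i = N * m := Nat.eq_of_mul_eq_mul_right (by omega) h4
    have h6 := congrArg (Nat.cast : ℕ → ℤ) h5
    push_cast at h6
    exact h6
  -- the quotient sum
  have hqN : (∑ k ∈ Finset.Icc 1 (N-1), ((a * k / N : ℕ) : ℤ)) * N
      = (((a:ℤ) - 1) * m) * N := by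
    have e : ∀ k ∈ Finset.Icc 1 (N-1),
        ((a * k / N : ℕ) : ℤ) * N = (a:ℤ) * k - ((a * k % N : ℕ) : ℤ) := by
      intro k _
      have h : a * k / N * N + a * k % N = a * k := Nat.div_add_mod' (a*k) N
      have h' : ((a * k / N * N + a * k % N : ℕ) : ℤ) = ((a * k : ℕ) : ℤ) :=
        congrArg _ h
      rw [Nat.cast_add, Nat.cast_mul, Nat.cast_mul] at h'
      push_cast
      linarith [h']
    rw [Finset.sum_mul, Finset.sum_congr rfl e, Finset.sum_sub_distrib]
    rw [reindex_aux N a hN hNa (fun j => (j:ℤ)), hsumj]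
    have : (∑ k ∈ Finset.Icc 1 (N-1), (a:ℤ) * (k:ℤ)) = (a:ℤ) * ((N:ℤ) * m) := by
      rw [← Finset.mul_sum, hsumj]
    rw [this]; ring
  have hq : (∑ k ∈ Finset.Icc 1 (N-1), ((a * k / N : ℕ) : ℤ)) = ((a:ℤ) - 1) * m :=
    mul_right_cancel₀ (by exact_mod_cast (by omega : N ≠ 0)) hqN
  rw [hsum1, hq]
  -- divisibility
  have hord : p ^ ν ∣ N - 1 := hν ▸ Nat.ordProj_dvd (N-1) p
  have hmdvd : p ^ ν ∣ m := by
    have hcop : Nat.Coprime (p^ν) 2 :=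
      Nat.Coprime.pow_left _ ((Nat.coprime_primes hp Nat.prime_two).mpr (by omega))
    exact hcop.dvd_of_dvd_mul_left (by rw [hm2]; exact hord)
  have hcast : ((N - 1 : ℕ) : ℤ) = (N:ℤ) - 1 := by omega
  have h1 : ((p:ℤ))^ν ∣ (N:ℤ) - 1 := by
    have := Int.natCast_dvd_natCast.mpr hord
    push_cast at this
    rwa [hcast] at this
  have h2 : ((p:ℤ))^ν ∣ (m:ℤ) := by
    have := Int.natCast_dvd_natCast.mpr hmdvd
    push_cast at this
    exact this
  apply Int.ModEq.symm
  rw [Int.modEq_iff_dvd]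
  have h3 : ((d:ℤ) - ((N:ℤ) - 1) - ((a:ℤ) - 1) * (m:ℤ)) - (d:ℤ)
      = -(((N:ℤ) - 1) + ((a:ℤ) - 1) * (m:ℤ)) := by ring
  rw [h3]
  exact dvd_neg.mpr (dvd_add h1 (h2.mul_left _))
end
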